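/- arXiv:0801.1783 — 4 statements merged into one kernel-verified Lean document; each statement's English description precedes it below -/
import Mathlib

section
/- Let A be a finite alphabet, n an integer with n ≥ 2, and X ⊆ A^ω a Π^0_n-complete set. Then X^≈ is a Π^0_{n+1}-complete subset of (A ∪ {◁})^ω. -/
open Set MeasureTheory

/-! ### Discrete topology on `Option` (the alphabet `A ∪ {◁}`) -/

instance optionTopology (A : Type*) : TopologicalSpace (Option A) := ⊥
instance optionDiscrete (A : Type*) : DiscreteTopology (Option A) := ⟨rfl⟩

/-! ### Finite-word eraser evaluation -/

/-- One step of the left-to-right backspace evaluation; the accumulator holds the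
(reversed) surviving word, `none` meaning the evaluation is undefined. -/
def eraseStep {B : Type*} [DecidableEq B] (e : B) (acc : Option (List B)) (a : B) :
    Option (List B) :=
  acc.bind fun l =>
    if a = e then (match l with | [] => none | _ :: t => some t) else some (a :: l)

/-- `finErase e u` is `some (u^e)` if the evaluation of the eraser `e` in `u` is
defined, and `none` otherwise. -/
def finErase {B : Type*} [DecidableEq B] (e : B) (u : List B) : Option (List B) :=
  (u.foldl (eraseStep e) (some [])).map List.reverse

/-- The length-`n` prefix `x[n]` of an infinite word. -/
def pre {B : Type*} (x : ℕ → B) (n : ℕ) : List B := (List.range n).map x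

/-- The infinite word `y` is the limit of the sequence of words `s n`
(every finite prefix of `y` eventually stabilizes). -/
def LimitsTo {B : Type*} (s : ℕ → ℕ → B) (y : ℕ → B) : Prop :=
  ∀ k : ℕ, ∃ N : ℕ, ∀ p ≥ N, ∀ i < k, s p i = y i

/-- `ErasesTo e x y` expresses that `x^e` is defined, infinite and equal to `y`:
all prefix evaluations `(x[p])^e` are defined, and for every `k` the length-`k`
prefix of `(x[p])^e` is eventually the length-`k` prefix of `y`. -/
def ErasesTo {B : Type*} [DecidableEq B] (e : B) (x y : ℕ → B) : Prop :=
  (∀ n, (finErase e (pre x n)).isSome) ∧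
  ∀ k : ℕ, ∃ N : ℕ, ∀ p ≥ N, ∀ l, finErase e (pre x p) = some l → l.take k = pre y k

/-- `X^≈ ⊆ (A ∪ {◁})^ω`, the eraser symbol `◁` being coded by `none`. -/
def ApproxSet {A : Type*} [DecidableEq A] (X : Set (ℕ → A)) : Set (ℕ → Option A) :=
  {x | ∃ y : ℕ → A, ErasesTo (none : Option A) x (fun i => some (y i)) ∧ y ∈ X}

/-! ### Wadge reducibility -/

/-- `S ≤_W T` : `S` is the preimage of `T` under some continuous map. -/
def WadgeLE {X Y : Type*} [TopologicalSpace X] [TopologicalSpace Y]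
    (S : Set X) (T : Set Y) : Prop :=
  ∃ f : X → Y, Continuous f ∧ S = f ⁻¹' T

/-! ### The Borel hierarchy (finite levels and level `ω`) -/

/-- The class `Σ^0_n` for finite `n ≥ 1`: `Σ^0_1` is the class of open sets and,
for `ξ > 1`, `Σ^0_ξ` is the class of countable unions of sets each of which is the
complement of a `Σ^0_{ξ'}` set for some `1 ≤ ξ' < ξ`. -/
def SigmaFin (X : Type*) [TopologicalSpace X] : ℕ → Set (Set X)
  | 0 => ∅
  | 1 => {s | IsOpen s}
  | (n+2) => {s | ∃ (f : ℕ → Set X) (m : ℕ → Fin (n+2)),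
      (∀ k, 1 ≤ (m k : ℕ) ∧ (f k)ᶜ ∈ SigmaFin X (m k)) ∧ s = ⋃ k, f k}
  termination_by n => n
  decreasing_by exact (m k).isLt

/-- `Π^0_n` : complements of `Σ^0_n` sets. -/
def PiFin (X : Type*) [TopologicalSpace X] (n : ℕ) : Set (Set X) :=
  {s | sᶜ ∈ SigmaFin X n}

/-- `Δ^0_n`. -/
def DeltaFin (X : Type*) [TopologicalSpace X] (n : ℕ) : Set (Set X) :=
  SigmaFin X n ∩ PiFin X n

/-- `Σ^0_ω` : countable unions of sets each in some `Π^0_{ξ'}` with `1 ≤ ξ' < ω`. -/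
def SigmaOmega (X : Type*) [TopologicalSpace X] : Set (Set X) :=
  {s | ∃ (f : ℕ → Set X) (m : ℕ → ℕ),
      (∀ k, 1 ≤ m k ∧ f k ∈ PiFin X (m k)) ∧ s = ⋃ k, f k}

/-- `Π^0_ω` : complements of `Σ^0_ω` sets. -/
def PiOmega (X : Type*) [TopologicalSpace X] : Set (Set X) :=
  {s | sᶜ ∈ SigmaOmega X}

/-- `Δ^0_ω = Σ^0_ω ∩ Π^0_ω`. -/
def DeltaOmega (X : Type*) [TopologicalSpace X] : Set (Set X) :=
  SigmaOmega X ∩ PiOmega X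

/-- `S ⊆ A^ω` is `Π^0_n`-complete: it is `Π^0_n` and every `Π^0_n` subset of a space
of infinite words over a finite alphabet (with the discrete topology) Wadge-reduces
to it. -/
def PiFinComplete {A : Type*} [TopologicalSpace A] (n : ℕ) (S : Set (ℕ → A)) : Prop :=
  S ∈ PiFin (ℕ → A) n ∧
    ∀ (B : Type) [Fintype B] [TopologicalSpace B] [DiscreteTopology B],
      ∀ T : Set (ℕ → B), T ∈ PiFin (ℕ → B) n → WadgeLE T S
/-! ### The alphabet `{0,1} ∪ {◁_n : 0 < n < ω}` and iterated erasing -/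

/-- The alphabet `{0,1} ∪ {◁_n : 0 < n < ω}` : `Sum.inl b` is the binary letter `b`
(`false` for `0`, `true` for `1`) and `Sum.inr k` is the eraser `◁_{k+1}`. -/
abbrev Letter : Type := Bool ⊕ ℕ

/-- The binary letter `0` or `1` viewed in the extended alphabet. -/
def ltr (b : Bool) : Letter := Sum.inl b

/-- The eraser `◁_{k+1}`. -/
def er (k : ℕ) : Letter := Sum.inr k

/-- `X^{≈∞}` for `X ⊆ {0,1}^ω` : those `x` such that each successive eraser
evaluation `x_n = (((x^{◁_1})^{◁_2})^…)^{◁_n}` is defined and infinite, and the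
limit of the `x_n` is defined, infinite, and belongs to `X`. -/
def InfEraseSet (X : Set (ℕ → Bool)) : Set (ℕ → Letter) :=
  {x | ∃ s : ℕ → (ℕ → Letter),
        s 0 = x ∧ (∀ n : ℕ, ErasesTo (er n) (s n) (s (n + 1))) ∧
        ∃ y : ℕ → Bool, y ∈ X ∧ LimitsTo s (fun i => ltr (y i))}

open Classical in
/-- `f(x) = x^◁` if `x^◁` is defined and infinite, and `f(x) = 0^ω` otherwise
(the eraser `◁` is coded by `none`, and `z` plays the role of the letter `0`). -/
noncomputable def eraseFun {A : Type*} [DecidableEq A] (z : A) (x : ℕ → Option A) :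
    ℕ → A :=
  if h : ∃ y : ℕ → A, ErasesTo (none : Option A) x (fun i => some (y i)) then h.choose
  else fun _ => z

open Classical in
/-- `f_{k+1}(x) = x^{◁_{k+1}}` if this is defined and infinite, `0^ω` otherwise. -/
noncomputable def fStep (k : ℕ) (x : ℕ → Letter) : ℕ → Letter :=
  if h : ∃ y : ℕ → Letter, ErasesTo (er k) x y then h.choose else fun _ => ltr false

/-- `fFun 0 = id` and `fFun (k+1) = f_{k+1}`. -/
noncomputable def fFun : ℕ → (ℕ → Letter) → (ℕ → Letter)
  | 0 => id
  | (k+1) => fStep k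

/-- `fIter n = f_n ∘ … ∘ f_1` (with `fIter 0 = id`). -/
noncomputable def fIter : ℕ → (ℕ → Letter) → (ℕ → Letter)
  | 0 => id
  | (n+1) => fun x => fStep n (fIter n x)

open Classical in
/-- `f_∞(x) = lim_{n<ω} (f_n ∘ … ∘ f_1)(x)` if this limit is defined and infinite
(and over `{0,1}`), and `f_∞(x) = 0^ω` otherwise. -/
noncomputable def fInf (x : ℕ → Letter) : ℕ → Bool :=
  if h : ∃ y : ℕ → Bool, LimitsTo (fun n => fIter n x) (fun i => ltr (y i)) then h.choose
  else fun _ => false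

/-- The set of infinite binary words containing infinitely many `1`s. -/
def InfManyOnes : Set (ℕ → Bool) := {y | {i | y i = true}.Infinite}
/-! ### The languages `L_n`, `L_∞`, `W`, and `ω`-powers -/

/-- Successive evaluation of the erasers `◁_1, …, ◁_n` (coded by
`Sum.inr 0, …, Sum.inr (n-1)`) on a finite word over `{0,1,◁_1,…,◁_n}`;
`none` if some evaluation is undefined. -/
def eraseChain (n : ℕ) (u : List (Bool ⊕ Fin n)) : Option (List (Bool ⊕ Fin n)) :=
  (List.finRange n).foldl (fun acc i => acc.bind (finErase (Sum.inr i))) (some u)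

/-- The language `L_n ⊆ {0,1,◁_1,…,◁_n}^*`: the words whose successive eraser
evaluations (first `◁_1`, then `◁_2`, …, then `◁_n`, each being defined) yield a
word in `0^*1`. -/
def Lword (n : ℕ) : Language (Bool ⊕ Fin n) :=
  {u | ∃ v, eraseChain n u = some v ∧
        ∃ k : ℕ, v = List.replicate k (Sum.inl false) ++ [Sum.inl true]}

/-- The eight-letter alphabet `{0, 1, α, B, C, D, E, β}`, coded as
`0, 1, 2, 3, 4, 5, 6, 7` respectively. -/
abbrev Gam : Type := Fin 8

/-- The code `α B^j C^j D^j E^j β` of the eraser `◁_j`. -/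
def eraserCode (j : ℕ) : List Gam :=
  (2 : Gam) :: (List.replicate j (3 : Gam) ++ List.replicate j (4 : Gam) ++
    List.replicate j (5 : Gam) ++ List.replicate j (6 : Gam) ++ [(7 : Gam)])

/-- Encoding of a letter of `{0,1,◁_1,…,◁_n}` over `{0, 1, α, B, C, D, E, β}` :
binary letters are kept, and `◁_j` is replaced by its code. -/
def encLetter {n : ℕ} : Bool ⊕ Fin n → List Gam
  | Sum.inl false => [(0 : Gam)]
  | Sum.inl true => [(1 : Gam)]
  | Sum.inr i => eraserCode ((i : ℕ) + 1)

/-- `L_∞ = ⋃_{n<ω} L_n`, with each eraser replaced by its code. -/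
def Linf : Language Gam :=
  {w | ∃ n : ℕ, ∃ u ∈ Lword n, w = (u.map encLetter).flatten}

/-- A wrong code: a word beginning with `α` and ending with `β` which is not of
the form `α B^j C^j D^j E^j β` for any `j ≥ 1`. -/
def IsWrongCode (v : List Gam) : Prop :=
  v.head? = some (2 : Gam) ∧ v.getLast? = some (7 : Gam) ∧ ¬ ∃ j ≥ 1, v = eraserCode j

/-- `W` : the finite words over `{0, 1, α, B, C, D, E, β}` containing (as a
subword, i.e. an infix) an occurrence of a wrong code. -/
def Wlang : Language Gam := {w | ∃ v, IsWrongCode v ∧ v <:+: w}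

/-- `l` is a prefix of the infinite word `x`. -/
def IsPrefixOfWord {A : Type*} (l : List A) (x : ℕ → A) : Prop :=
  l = (List.range l.length).map x

/-- The `ω`-power `V^ω = {u_1 u_2 … : ∀ n, u_n ∈ V \ {ε}}` of a language of
finite words. -/
def omegaPower {A : Type*} (V : Language A) : Set (ℕ → A) :=
  {x | ∃ u : ℕ → List A, (∀ n, u n ∈ V ∧ u n ≠ []) ∧
        ∀ n, IsPrefixOfWord (((List.range n).map u).flatten) x}

/-- The finite word `v` occurs in the infinite word `x` at position `i`. -/
def OccursAt {A : Type*} [Inhabited A] (v : List A) (x : ℕ → A) (i : ℕ) : Prop :=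
  ∀ j < v.length, x (i + j) = v.getD j default

/-- A wrong code occurs in `x` at position `i`. -/
def WrongAt (x : ℕ → Gam) (i : ℕ) : Prop := ∃ v, IsWrongCode v ∧ OccursAt v x i

/-- The concatenation `w · y` of a finite word and an infinite word. -/
def wordAppend {A : Type*} (w : List A) (y : ℕ → A) : ℕ → A :=
  fun i => if h : i < w.length then w.get ⟨i, h⟩ else y (i - w.length)

/-- `U · Z = {u y : u ∈ U, y ∈ Z}` for `U` a set of finite words and `Z` a set of
infinite words. -/
def concatSet {A : Type*} (U : Language A) (Z : Set (ℕ → A)) : Set (ℕ → A) :=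
  {x | ∃ u ∈ U, ∃ y ∈ Z, x = wordAppend u y}

/-- The language `V = L_∞ ∪ W`. -/
def Vlang : Language Gam := {w | w ∈ Linf ∨ w ∈ Wlang}


/-! ### Auxiliary infrastructure (added for the proof) -/

namespace ErAux

open Classical

/-! #### Prefix lemmas -/

theorem pre_length {B : Type*} (x : ℕ → B) (n : ℕ) : (pre x n).length = n := by
  simp [pre]

theorem pre_zero {B : Type*} (x : ℕ → B) : pre x 0 = [] := rfl

theorem pre_succ {B : Type*} (x : ℕ → B) (n : ℕ) :
    pre x (n + 1) = pre x n ++ [x n] := by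
  simp [pre, List.range_succ]

theorem pre_getElem {B : Type*} (x : ℕ → B) {n i : ℕ} (h : i < n) :
    (pre x n)[i]'(by simpa [pre_length] using h) = x i := by
  simp [pre]

theorem pre_eq_iff {B : Type*} {x y : ℕ → B} {n : ℕ} :
    pre x n = pre y n ↔ ∀ i < n, x i = y i := by
  constructor
  · intro h i hi
    have h1 : (pre x n)[i]'(by simpa [pre_length] using hi)
        = (pre y n)[i]'(by simpa [pre_length] using hi) := by
      simp only [h]
    simpa [pre_getElem, hi] using h1
  · intro h
    unfold pre
    apply List.map_congr_left
    intro a ha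
    exact h a (List.mem_range.mp ha)

theorem pre_take {B : Type*} (x : ℕ → B) {n m : ℕ} (h : n ≤ m) :
    (pre x m).take n = pre x n := by
  apply List.ext_getElem
  · simp [pre_length, Nat.min_eq_left h]
  · intro i h1 h2
    have hi : i < n := by simpa [pre_length, Nat.min_eq_left h] using h1
    simp [pre, Nat.lt_of_lt_of_le hi h]

theorem pre_agree_mono {B : Type*} {x y : ℕ → B} {n m : ℕ} (h : n ≤ m)
    (hxy : pre x m = pre y m) : pre x n = pre y n := by
  rw [← pre_take x h, ← pre_take y h, hxy]

theorem pre_comp {B C : Type*} (f : B → C) (x : ℕ → B) (n : ℕ) :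
    pre (fun i => f (x i)) n = (pre x n).map f := by
  simp [pre]

/-! #### Cylinders and prefix-determined sets -/

def Cyl {C : Type*} (w : List C) : Set (ℕ → C) := {x | pre x w.length = w}

theorem isOpen_prefixSet {C : Type*} [TopologicalSpace C] [DiscreteTopology C]
    (m : ℕ) (Φ : List C → Prop) : IsOpen {x : ℕ → C | Φ (pre x m)} := by
  induction m generalizing Φ with
  | zero =>
    by_cases h : Φ []
    · have : {x : ℕ → C | Φ (pre x 0)} = Set.univ := by
        ext x; simp [pre_zero, h]
      rw [this]; exact isOpen_univ
    · have : {x : ℕ → C | Φ (pre x 0)} = ∅ := by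
        ext x; simp [pre_zero, h]
      rw [this]; exact isOpen_empty
  | succ m ih =>
    have : {x : ℕ → C | Φ (pre x (m + 1))}
        = ⋃ c : C, ({x : ℕ → C | x m = c} ∩ {x : ℕ → C | Φ (pre x m ++ [c])}) := by
      ext x
      simp only [Set.mem_setOf_eq, Set.mem_iUnion, Set.mem_inter_iff]
      constructor
      · intro h; exact ⟨x m, rfl, by rwa [← pre_succ]⟩
      · rintro ⟨c, hc, h⟩; rwa [pre_succ, hc]
    rw [this]
    apply isOpen_iUnion
    intro c
    apply IsOpen.inter
    · have : {x : ℕ → C | x m = c} = (fun x : ℕ → C => x m) ⁻¹' {c} := rfl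
      rw [this]
      have hs : IsOpen ({c} : Set C) := isOpen_discrete _
      exact IsOpen.preimage (continuous_apply m) hs
    · exact ih (fun l => Φ (l ++ [c]))

theorem isClosed_prefixSet {C : Type*} [TopologicalSpace C] [DiscreteTopology C]
    (m : ℕ) (Φ : List C → Prop) : IsClosed {x : ℕ → C | Φ (pre x m)} := by
  rw [← isOpen_compl_iff]
  have : {x : ℕ → C | Φ (pre x m)}ᶜ = {x : ℕ → C | ¬ Φ (pre x m)} := rfl
  rw [this]
  exact isOpen_prefixSet (C := C) m (fun l => ¬ Φ l)

theorem isOpen_cyl {C : Type*} [TopologicalSpace C] [DiscreteTopology C]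
    (w : List C) : IsOpen (Cyl w) := isOpen_prefixSet w.length (fun l => l = w)

theorem isClosed_cyl {C : Type*} [TopologicalSpace C] [DiscreteTopology C]
    (w : List C) : IsClosed (Cyl w) := isClosed_prefixSet w.length (fun l => l = w)

theorem exists_prefix_subset {C : Type*} [TopologicalSpace C] [DiscreteTopology C]
    {U : Set (ℕ → C)} (hU : IsOpen U) {x : ℕ → C} (hx : x ∈ U) :
    ∃ m, ∀ y, pre y m = pre x m → y ∈ U := by
  rcases isOpen_pi_iff.mp hU x hx with ⟨I, u, h1, h2⟩
  refine ⟨I.sup id + 1, fun y hy => h2 ?_⟩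
  rw [Set.mem_pi]
  intro i hi
  have hiI : i ∈ I := Finset.mem_coe.mp hi
  have him : i < I.sup id + 1 := Nat.lt_succ_of_le (Finset.le_sup (f := id) hiI)
  rw [pre_eq_iff.mp hy i him]
  exact (h1 i hiI).2

theorem open_eq_iUnion_cyl {C : Type*} [TopologicalSpace C] [DiscreteTopology C]
    {U : Set (ℕ → C)} (hU : IsOpen U) :
    U = ⋃ w : {w : List C // Cyl w ⊆ U}, Cyl w.1 := by
  ext x
  simp only [Set.mem_iUnion]
  constructor
  · intro hx
    obtain ⟨m, hm⟩ := exists_prefix_subset hU hx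
    refine ⟨⟨pre x m, ?_⟩, ?_⟩
    · intro y hy
      exact hm y (by simpa [Cyl, pre_length] using hy)
    · simp [Cyl, pre_length]
  · rintro ⟨w, hw⟩
    exact w.2 hw

/-! #### Closure properties of the Borel classes -/

section Sigma

variable {X : Type*} [TopologicalSpace X]

theorem sigmaFin_zero : SigmaFin X 0 = ∅ := by rw [SigmaFin]

theorem sigmaFin_one : SigmaFin X 1 = {s | IsOpen s} := by rw [SigmaFin]

theorem sigmaFin_add_two (n : ℕ) : SigmaFin X (n+2) =
    {s | ∃ (f : ℕ → Set X) (m : ℕ → Fin (n+2)),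
      (∀ k, 1 ≤ (m k : ℕ) ∧ (f k)ᶜ ∈ SigmaFin X (m k)) ∧ s = ⋃ k, f k} := by
  rw [SigmaFin]

theorem mem_sigmaFin_one {s : Set X} (h : IsOpen s) : s ∈ SigmaFin X 1 := by
  rw [sigmaFin_one]; exact h

theorem isOpen_of_mem_sigmaFin_one {s : Set X} (h : s ∈ SigmaFin X 1) : IsOpen s := by
  rwa [sigmaFin_one] at h

theorem sigmaFin_iUnion {ι : Type*} [Countable ι] (g : ι → Set X) (lev : ι → ℕ) (M : ℕ)
    (h1 : ∀ i, 1 ≤ lev i) (h2 : ∀ i, lev i ≤ M + 1)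
    (h3 : ∀ i, (g i)ᶜ ∈ SigmaFin X (lev i)) :
    (⋃ i, g i) ∈ SigmaFin X (M + 2) := by
  rw [sigmaFin_add_two]
  rcases isEmpty_or_nonempty ι with hι | hι
  · refine ⟨fun _ => ∅, fun _ => ⟨1, by omega⟩, fun k => ⟨le_refl 1, ?_⟩, ?_⟩
    · rw [Set.compl_empty]; exact mem_sigmaFin_one isOpen_univ
    · haveI := hι
      simp
  · obtain ⟨σ, hσ⟩ := exists_surjective_nat ι
    exact ⟨fun k => g (σ k), fun k => ⟨lev (σ k), by have := h2 (σ k); omega⟩,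
      fun k => ⟨h1 (σ k), h3 (σ k)⟩, (hσ.iUnion_comp g).symm⟩

theorem sigmaFin_closed {F : Set X} (hF : IsClosed F) (M : ℕ) :
    F ∈ SigmaFin X (M + 2) := by
  have h : F = ⋃ _ : Unit, F := (Set.iUnion_const F).symm
  rw [h]
  exact sigmaFin_iUnion _ (fun _ => 1) M (fun _ => le_refl 1)
    (fun _ => by show (1:ℕ) ≤ M + 1; omega)
    (fun _ => mem_sigmaFin_one hF.isOpen_compl)

theorem sigmaFin_empty (M : ℕ) : (∅ : Set X) ∈ SigmaFin X (M + 2) :=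
  sigmaFin_closed isClosed_empty M

theorem sigmaFin_union {s t : Set X} {M : ℕ} (hs : s ∈ SigmaFin X (M+2))
    (ht : t ∈ SigmaFin X (M+2)) : s ∪ t ∈ SigmaFin X (M+2) := by
  rw [sigmaFin_add_two] at hs ht ⊢
  obtain ⟨f1, m1, h1, rfl⟩ := hs
  obtain ⟨f2, m2, h2, rfl⟩ := ht
  refine ⟨fun k => if k % 2 = 0 then f1 (k/2) else f2 (k/2),
    fun k => if k % 2 = 0 then m1 (k/2) else m2 (k/2), fun k => ?_, ?_⟩
  · by_cases h : k % 2 = 0 <;> simp only [h, if_true, if_false, reduceIte] <;>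
      [exact h1 _; exact h2 _]
  · ext x
    simp only [Set.mem_union, Set.mem_iUnion]
    constructor
    · rintro (⟨k, hk⟩ | ⟨k, hk⟩)
      · have e1 : (2*k) % 2 = 0 := by omega
        have e2 : (2*k) / 2 = k := by omega
        exact ⟨2*k, by simp only [e1, e2, if_true, reduceIte]; exact hk⟩
      · have e1 : (2*k+1) % 2 = 1 := by omega
        have e2 : (2*k+1) / 2 = k := by omega
        refine ⟨2*k+1, ?_⟩
        simp only [e1, e2]
        simpa using hk
    · rintro ⟨k, hk⟩
      by_cases h : k % 2 = 0
      · left; exact ⟨k/2, by simpa [h] using hk⟩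
      · right; exact ⟨k/2, by simpa [h] using hk⟩

theorem sigmaFin_preimage {X Y : Type*} [TopologicalSpace X] [TopologicalSpace Y]
    {f : X → Y} (hf : Continuous f) :
    ∀ m, ∀ s ∈ SigmaFin Y m, f ⁻¹' s ∈ SigmaFin X m := by
  intro m
  induction m using Nat.strong_induction_on with
  | _ m IH =>
    rcases m with _ | m
    · intro s hs; rw [sigmaFin_zero] at hs; exact absurd hs (Set.notMem_empty s)
    rcases m with _ | M
    · intro s hs
      exact mem_sigmaFin_one (hf.isOpen_preimage s (isOpen_of_mem_sigmaFin_one hs))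
    · intro s hs
      rw [sigmaFin_add_two] at hs ⊢
      obtain ⟨g, lv, hg, rfl⟩ := hs
      refine ⟨fun k => f ⁻¹' g k, lv, fun k => ⟨(hg k).1, ?_⟩, by rw [Set.preimage_iUnion]⟩
      rw [← Set.preimage_compl]
      exact IH (lv k) (lv k).isLt _ (hg k).2

end Sigma

section SigmaSeq

variable {C : Type*} [TopologicalSpace C] [DiscreteTopology C] [Countable C]

theorem sigmaFin_mono {m m' : ℕ} (h1 : 1 ≤ m) (h : m ≤ m') {s : Set (ℕ → C)}
    (hs : s ∈ SigmaFin (ℕ → C) m) : s ∈ SigmaFin (ℕ → C) m' := by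
  rcases eq_or_lt_of_le h with rfl | hlt
  · exact hs
  · obtain ⟨M, rfl⟩ : ∃ M, m' = M + 2 := ⟨m' - 2, by omega⟩
    rcases m with _ | m
    · omega
    rcases m with _ | m''
    · have hs' := isOpen_of_mem_sigmaFin_one hs
      rw [open_eq_iUnion_cyl hs']
      exact sigmaFin_iUnion _ (fun _ => 1) M (fun _ => le_refl 1)
        (fun _ => by show (1:ℕ) ≤ M + 1; omega)
        (fun w => mem_sigmaFin_one (isClosed_cyl w.1).isOpen_compl)
    · rw [sigmaFin_add_two] at hs
      obtain ⟨f, lv, hf, rfl⟩ := hs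
      rw [sigmaFin_add_two]
      exact ⟨f, fun k => ⟨lv k, by have := (lv k).isLt; omega⟩,
        fun k => ⟨(hf k).1, (hf k).2⟩, rfl⟩

end SigmaSeq

/-! #### Stack lemmas for the eraser evaluation -/

section Stack

variable {A : Type*} [DecidableEq A]

theorem foldl_eraseStep_none {B : Type*} [DecidableEq B] (e : B) (w : List B) :
    w.foldl (eraseStep e) none = none := by
  induction w with
  | nil => rfl
  | cons a w ih => simpa [eraseStep] using ih

theorem foldl_pushes (u : List A) (s : List (Option A)) :
    (u.map some).foldl (eraseStep (none : Option A)) (some s)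
      = some ((u.map some).reverse ++ s) := by
  induction u generalizing s with
  | nil => simp
  | cons a u ih =>
    simp only [List.map_cons, List.foldl_cons]
    have h1 : eraseStep (none : Option A) (some s) (some a) = some (some a :: s) := by
      simp [eraseStep]
    rw [h1, ih]
    simp

theorem foldl_pops (r : ℕ) (s : List (Option A)) (h : r ≤ s.length) :
    (List.replicate r (none : Option A)).foldl (eraseStep none) (some s)
      = some (s.drop r) := by
  induction r generalizing s with
  | zero => simp
  | succ r ih =>
    rcases s with _ | ⟨b, s⟩
    · simp at h
    · have h1 : eraseStep (none : Option A) (some (b :: s)) none = some s := by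
        simp [eraseStep]
      rw [List.replicate_succ, List.foldl_cons, h1, ih s (by simpa using h)]
      rfl

theorem foldl_pad (a₀ : A) (s : List (Option A)) :
    ([some a₀, none] : List (Option A)).foldl (eraseStep none) (some s) = some s := by
  simp [eraseStep]

/-- Elements of the eraser stack are never the eraser symbol. -/
theorem foldl_stack_ne {B : Type*} [DecidableEq B] (e : B) :
    ∀ (v : List B) (s₀ s : List B), (∀ a ∈ s₀, a ≠ e) →
      v.foldl (eraseStep e) (some s₀) = some s → ∀ a ∈ s, a ≠ e := by
  intro v
  induction v with
  | nil =>
    intro s₀ s h he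
    simp only [List.foldl_nil, Option.some.injEq] at he
    rwa [← he]
  | cons b v ih =>
    intro s₀ s h he
    simp only [List.foldl_cons] at he
    by_cases hb : b = e
    · rcases s₀ with _ | ⟨c, t⟩
      · rw [hb] at he
        simp only [eraseStep, Option.bind_some, if_pos rfl, if_true] at he
        rw [foldl_eraseStep_none] at he
        exact absurd he (by simp)
      · rw [hb] at he
        simp only [eraseStep, Option.bind_some, if_pos rfl, if_true] at he
        exact ih t s (fun a ha => h a (List.mem_cons_of_mem c ha)) he
    · simp only [eraseStep, Option.bind_some, if_neg hb] at he
      refine ih (b :: s₀) s ?_ he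
      intro a ha
      rcases List.mem_cons.mp ha with rfl | ha
      · exact hb
      · exact h a ha

/-! #### Longest common prefix -/

def lcp : List A → List A → List A
  | a :: l, b :: m => if a = b then a :: lcp l m else []
  | _, _ => []

theorem lcp_prefix_left : ∀ l m : List A, lcp l m <+: l
  | [], _ => by simp [lcp]
  | _ :: _, [] => by simp [lcp]
  | a :: l, b :: m => by
    by_cases h : a = b
    · simpa [lcp, if_pos h] using lcp_prefix_left l m
    · simp [lcp, if_neg h]

theorem lcp_prefix_right : ∀ l m : List A, lcp l m <+: m
  | [], _ => by simp [lcp]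
  | _ :: _, [] => by simp [lcp]
  | a :: l, b :: m => by
    by_cases h : a = b
    · subst h
      simpa [lcp] using lcp_prefix_right l m
    · simp [lcp, if_neg h]

theorem prefix_lcp : ∀ (w l m : List A), w <+: l → w <+: m → w <+: lcp l m
  | [], _, _, _, _ => List.nil_prefix
  | c :: w, l, m, hl, hm => by
    rcases l with _ | ⟨a, l⟩
    · exact absurd (List.eq_nil_of_prefix_nil hl) (by simp)
    rcases m with _ | ⟨b, m⟩
    · exact absurd (List.eq_nil_of_prefix_nil hm) (by simp)
    rcases List.cons_prefix_cons.mp hl with ⟨rfl, hl'⟩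
    rcases List.cons_prefix_cons.mp hm with ⟨hb, hm'⟩
    subst hb
    have hx : lcp (c :: l) (c :: m) = c :: lcp l m := by simp [lcp]
    rw [hx]
    exact List.cons_prefix_cons.mpr ⟨rfl, prefix_lcp w l m hl' hm'⟩

theorem take_of_prefix {w v : List A} (h : w <+: v) : v.take w.length = w :=
  (List.prefix_iff_eq_take.mp h).symm

/-! #### Stacks and blocks -/

def stk (v : List A) : List (Option A) := (v.map some).reverse

theorem stk_length (v : List A) : (stk v).length = v.length := by simp [stk]

theorem stk_append (x y : List A) : stk (x ++ y) = (y.map some).reverse ++ stk x := by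
  simp [stk]

theorem reverse_drop' (l : List α) (r : ℕ) (h : r ≤ l.length) :
    l.reverse.drop r = (l.take (l.length - r)).reverse := by
  induction l using List.reverseRecOn generalizing r with
  | nil => simp
  | append_singleton l a ih =>
    rcases r with _ | r
    · have h0 : (l ++ [a]).take ((l ++ [a]).length - 0) = l ++ [a] := by
        rw [Nat.sub_zero, List.take_length]
      rw [List.drop_zero, h0]
    · have hr : r ≤ l.length := by simpa using h
      have h1 : (l ++ [a]).reverse = a :: l.reverse := by simp
      have h2 : (l ++ [a]).length - (r + 1) = l.length - r := by
        simp only [List.length_append, List.length_singleton]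
        omega
      rw [h1, h2, List.drop_succ_cons, ih r hr]
      congr 1
      rw [List.take_append]
      have : l.length - r - l.length = 0 := by omega
      rw [this]
      simp

theorem drop_stk (v : List A) (r : ℕ) (h : r ≤ v.length) :
    (stk v).drop r = stk (v.take (v.length - r)) := by
  unfold stk
  rw [reverse_drop' _ _ (by simpa using h)]
  congr 1
  rw [← List.map_take]
  congr 2
  simp

def blockOf (a₀ : A) (v v' : List A) : List (Option A) :=
  List.replicate (v.length - (lcp v v').length) (none : Option A)
    ++ (v'.drop (lcp v v').length).map some ++ [some a₀, none]

theorem blockOf_length_pos (a₀ : A) (v v' : List A) : 0 < (blockOf a₀ v v').length := by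
  simp [blockOf]

theorem block_core (v v' : List A) :
    (List.replicate (v.length - (lcp v v').length) (none : Option A)
      ++ (v'.drop (lcp v v').length).map some).foldl
        (eraseStep (none : Option A)) (some (stk v)) = some (stk v') := by
  have hLv := lcp_prefix_left v v'
  have hLv' := lcp_prefix_right v v'
  have hlen : (lcp v v').length ≤ v.length := hLv.length_le
  rw [List.foldl_append]
  rw [foldl_pops _ _ (by rw [stk_length]; omega)]
  rw [drop_stk _ _ (by omega)]
  have h1 : v.length - (v.length - (lcp v v').length) = (lcp v v').length := by omega
  rw [h1, take_of_prefix hLv]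
  rw [foldl_pushes]
  rw [← stk_append]
  congr 1
  conv_rhs => rw [← List.take_append_drop (lcp v v').length v']
  rw [take_of_prefix hLv']

theorem block_final (a₀ : A) (v v' : List A) :
    (blockOf a₀ v v').foldl (eraseStep (none : Option A)) (some (stk v)) = some (stk v') := by
  unfold blockOf
  rw [List.foldl_append, block_core, foldl_pad]

theorem block_inter (a₀ : A) (v v' w : List A) (hw : w <+: v) (hw' : w <+: v') (r : ℕ) :
    ∃ u : List A, w <+: u ∧
      ((blockOf a₀ v v').take r).foldl (eraseStep (none : Option A)) (some (stk v))
        = some (stk u) := by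
  have hLv := lcp_prefix_left v v'
  have hLv' := lcp_prefix_right v v'
  have hwL : w <+: lcp v v' := prefix_lcp _ _ _ hw hw'
  have hlenL : (lcp v v').length ≤ v.length := hLv.length_le
  have hlenL' : (lcp v v').length ≤ v'.length := hLv'.length_le
  have hlenw : w.length ≤ (lcp v v').length := hwL.length_le
  set L := lcp v v' with hLdef
  set P := v.length - L.length with hP
  set Q := ((v'.drop L.length).map (some : A → Option A)).length with hQ
  have hQ' : Q = v'.length - L.length := by simp [hQ]
  by_cases h1 : r ≤ P
  · have htake : (blockOf a₀ v v').take r = List.replicate r (none : Option A) := by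
      unfold blockOf
      rw [List.take_append, List.take_append]
      rw [List.take_replicate]
      have e0 : (List.replicate P (none : Option A)).length = P := by
        simp
      rw [e0]
      have e1 : min r P = r := by omega
      have e2 : r - P = 0 := by omega
      rw [e1, e2]
      simp only [List.take_zero, List.append_nil]
      have e3 : r - (List.replicate P (none : Option A)
          ++ (v'.drop L.length).map some).length = 0 := by
        simp only [List.length_append, List.length_replicate, List.length_map,
          List.length_drop]
        omega
      rw [e3]
      simp
    refine ⟨v.take (v.length - r), ?_, ?_⟩
    · refine List.prefix_of_prefix_length_le hw (List.take_prefix _ _) ?_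
      rw [List.length_take]
      omega
    · rw [htake, foldl_pops _ _ (by rw [stk_length]; omega), drop_stk _ _ (by omega)]
  · by_cases h2 : r ≤ P + Q
    · have htake : (blockOf a₀ v v').take r
          = List.replicate P (none : Option A)
            ++ (((v'.drop L.length).map some).take (r - P)) := by
        unfold blockOf
        rw [List.take_append, List.take_append]
        rw [List.take_replicate]
        have e0 : (List.replicate P (none : Option A)).length = P := by simp
        rw [e0]
        have e1 : min r P = P := by omega
        have e2 : r - (List.replicate P (none : Option A)
            ++ (v'.drop L.length).map some).length = 0 := by
          simp
          omega
        rw [e1, e2]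
        simp [← hLdef]
      refine ⟨L ++ (v'.drop L.length).take (r - P), hwL.trans (L.prefix_append _), ?_⟩
      rw [htake, List.foldl_append]
      rw [foldl_pops _ _ (by rw [stk_length]; omega), drop_stk _ _ (by omega)]
      have h3 : v.length - P = L.length := by omega
      rw [h3, take_of_prefix hLv]
      rw [← List.map_take, foldl_pushes]
      rw [← stk_append]
    · have hcore : (List.replicate P (none : Option A)
          ++ (v'.drop L.length).map some).length = P + Q := by simp [hQ]
      by_cases h3 : r = P + Q + 1
      · have htake : (blockOf a₀ v v').take r
            = (List.replicate P (none : Option A)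
              ++ ((v'.drop L.length).map some)) ++ [some a₀] := by
          unfold blockOf
          rw [List.take_append]
          rw [List.take_of_length_le (by rw [hcore]; omega)]
          rw [hcore]
          have e1 : r - (P + Q) = 1 := by omega
          rw [e1]
          rfl
        refine ⟨v' ++ [a₀], hw'.trans (v'.prefix_append _), ?_⟩
        rw [htake, List.foldl_append, block_core]
        have : List.foldl (eraseStep (none : Option A)) (some (stk v')) [some a₀]
            = some (some a₀ :: stk v') := by simp [eraseStep]
        rw [this]
        congr 1
        rw [stk_append]
        rfl
      · have htake : (blockOf a₀ v v').take r = blockOf a₀ v v' := by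
          apply List.take_of_length_le
          unfold blockOf
          simp only [List.length_append, hcore]
          simp [hQ, ← hLdef]
          omega
        exact ⟨v', hw', by rw [htake, block_final]⟩

end Stack

/-! #### Part 1 : the upper bound -/

section PartOne

variable {A : Type} [Fintype A] [DecidableEq A] [TopologicalSpace A] [DiscreteTopology A]

def Ddef (A : Type) [DecidableEq A] : Set (ℕ → Option A) :=
  {x | ∀ p, (finErase (none : Option A) (pre x p)).isSome}

def StabSet (A : Type) [DecidableEq A] (k N : ℕ) (w : List (Option A)) :
    Set (ℕ → Option A) :=
  {x | ∀ p ≥ N, ∀ l, finErase (none : Option A) (pre x p) = some l → l.take k = w}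

def Dconv (A : Type) [DecidableEq A] : Set (ℕ → Option A) :=
  {x | ∀ k : ℕ, ∃ N w, w.length = k ∧ x ∈ StabSet A k N w}

def Edom (A : Type) [DecidableEq A] : Set (ℕ → Option A) := Ddef A ∩ Dconv A

theorem isClosed_Ddef : IsClosed (Ddef A) := by
  have h : Ddef A = ⋂ p, {x : ℕ → Option A |
      ((finErase (none : Option A) (pre x p)).isSome : Prop)} := by
    ext x; simp [Ddef, Set.mem_iInter]
  rw [h]
  exact isClosed_iInter fun p =>
    isClosed_prefixSet p (fun v => ((finErase (none : Option A) v).isSome : Prop))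

theorem isClosed_StabSet (k N : ℕ) (w : List (Option A)) :
    IsClosed (StabSet A k N w) := by
  have h : StabSet A k N w = ⋂ p, {x : ℕ → Option A |
      p ≥ N → ∀ l, finErase (none : Option A) (pre x p) = some l → l.take k = w} := by
    ext x; simp [StabSet, Set.mem_iInter]
  rw [h]
  exact isClosed_iInter fun p =>
    isClosed_prefixSet p
      (fun v => p ≥ N → ∀ l, finErase (none : Option A) v = some l → l.take k = w)

theorem erasesTo_unique {B : Type*} [DecidableEq B] {e : B} {x y y' : ℕ → B}
    (h : ErasesTo e x y) (h' : ErasesTo e x y') : y = y' := by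
  funext i
  obtain ⟨N, hN⟩ := h.2 (i+1)
  obtain ⟨N', hN'⟩ := h'.2 (i+1)
  obtain ⟨l, hl⟩ := Option.isSome_iff_exists.mp (h.1 (max N N'))
  have e1 := hN (max N N') (le_max_left _ _) l hl
  have e2 := hN' (max N N') (le_max_right _ _) l hl
  exact pre_eq_iff.mp (e1.symm.trans e2) i (by omega)

theorem finErase_all_some {l v : List (Option A)}
    (h : finErase (none : Option A) v = some l) : ∀ a ∈ l, a ≠ none := by
  unfold finErase at h
  rcases ho : v.foldl (eraseStep (none : Option A)) (some []) with _ | s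
  · rw [ho] at h; simp at h
  · rw [ho] at h
    simp only [Option.map_some, Option.some.injEq] at h
    intro a ha
    have hs := foldl_stack_ne (none : Option A) v [] s (by simp) ho
    exact hs a (by rw [← h] at ha; exact List.mem_reverse.mp ha)

theorem getD_take {α : Type*} : ∀ (l : List α) (m i : ℕ), i < m → ∀ d : α,
    (l.take m).getD i d = l.getD i d := by
  intro l
  induction l with
  | nil => intro m i _ d; simp
  | cons a l ih =>
    intro m i him d
    rcases m with _ | m
    · omega
    rcases i with _ | i
    · simp
    · simp only [List.take_succ_cons, List.getD_cons_succ]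
      exact ih m i (by omega) d

theorem edom_iff (hA : Nonempty A) {x : ℕ → Option A} :
    x ∈ Edom A ↔ ∃ y : ℕ → A, ErasesTo (none : Option A) x (fun i => some (y i)) := by
  constructor
  · rintro ⟨hd, hc⟩
    choose Nf wf hlen hst using hc
    have hco : ∀ k k', k ≤ k' → wf k = (wf k').take k := by
      intro k k' hkk
      obtain ⟨l, hl⟩ := Option.isSome_iff_exists.mp (hd (max (Nf k) (Nf k')))
      have e1 := hst k _ (le_max_left _ _) l hl
      have e2 := hst k' _ (le_max_right _ _) l hl
      rw [← e1, ← e2, List.take_take, min_eq_left hkk]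
    have hsome : ∀ k, ∀ a ∈ wf k, a ≠ none := by
      intro k
      obtain ⟨l, hl⟩ := Option.isSome_iff_exists.mp (hd (Nf k))
      have e1 := hst k (Nf k) (le_refl _) l hl
      rw [← e1]
      intro a ha
      exact finErase_all_some hl a (List.take_subset _ _ ha)
    obtain ⟨a₀⟩ := hA
    set y : ℕ → A := fun i => ((wf (i+1)).getD i none).getD a₀ with hy
    have hentry : ∀ k i, i < k → (wf k).getD i none = some (y i) := by
      intro k i hik
      have h1 : (wf k).getD i none = (wf (i+1)).getD i none := by
        rw [hco (i+1) k hik, getD_take _ _ _ (by omega)]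
      rw [h1]
      have h2 : (wf (i+1)).getD i none ≠ none := by
        have hilen : i < (wf (i+1)).length := by rw [hlen]; omega
        rw [List.getD_eq_getElem _ _ hilen]
        exact hsome (i+1) _ (List.getElem_mem hilen)
      rcases he : (wf (i+1)).getD i none with _ | b
      · exact absurd he h2
      · have hb : y i = b := by
          simp only [hy]
          rw [he]
          rfl
        rw [hb]
    refine ⟨y, hd, ?_⟩
    intro k
    refine ⟨Nf k, fun p hp l hl => ?_⟩
    rw [hst k p hp l hl]
    apply List.ext_getElem
    · simp [hlen, pre_length]
    · intro i h1 h2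
      have hik : i < k := by rwa [hlen] at h1
      have := hentry k i hik
      rw [List.getD_eq_getElem _ _ h1] at this
      rw [this, pre_getElem _ hik]
  · rintro ⟨y, hy⟩
    refine ⟨hy.1, fun k => ?_⟩
    obtain ⟨N, hN⟩ := hy.2 k
    exact ⟨N, pre (fun i => some (y i)) k, pre_length _ _, hN⟩

theorem approxSet_iUnion {ι : Type*} (S : ι → Set (ℕ → A)) :
    ApproxSet (⋃ k, S k) = ⋃ k, ApproxSet (S k) := by
  ext x
  simp only [ApproxSet, Set.mem_setOf_eq, Set.mem_iUnion]
  constructor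
  · rintro ⟨y, hy, k, hk⟩; exact ⟨k, y, hy, hk⟩
  · rintro ⟨k, y, hy, hk⟩; exact ⟨y, hy, k, hk⟩

theorem approxSet_compl (hA : Nonempty A) (S : Set (ℕ → A)) :
    ApproxSet Sᶜ = Edom A \ ApproxSet S := by
  ext x
  constructor
  · rintro ⟨y, hy, hyS⟩
    refine ⟨(edom_iff hA).mpr ⟨y, hy⟩, ?_⟩
    rintro ⟨y', hy', hy'S⟩
    have h1 : (fun i => some (y i)) = (fun i => some (y' i)) := erasesTo_unique hy hy'
    have h2 : y = y' := funext fun i => Option.some_injective A (congrFun h1 i)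
    exact hyS (h2 ▸ hy'S)
  · rintro ⟨hx, hnx⟩
    obtain ⟨y, hy⟩ := (edom_iff hA).mp hx
    exact ⟨y, hy, fun hyS => hnx ⟨y, hy, hyS⟩⟩

theorem approxSet_cyl (hA : Nonempty A) (w : List A) :
    ApproxSet (Cyl w) = Edom A ∩ ⋃ N, StabSet A w.length N (w.map some) := by
  ext x
  simp only [Set.mem_inter_iff, Set.mem_iUnion]
  constructor
  · rintro ⟨y, hy, hyC⟩
    refine ⟨(edom_iff hA).mpr ⟨y, hy⟩, ?_⟩
    obtain ⟨N, hN⟩ := hy.2 w.length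
    refine ⟨N, fun p hp l hl => ?_⟩
    rw [hN p hp l hl, pre_comp]
    have hyC' : pre y w.length = w := hyC
    rw [hyC']
  · rintro ⟨hx, N, hN⟩
    obtain ⟨y, hy⟩ := (edom_iff hA).mp hx
    refine ⟨y, hy, ?_⟩
    obtain ⟨N', hN'⟩ := hy.2 w.length
    obtain ⟨l, hl⟩ := Option.isSome_iff_exists.mp (hy.1 (max N N'))
    have e1 := hN _ (le_max_left _ _) l hl
    have e2 := hN' _ (le_max_right _ _) l hl
    rw [e1, pre_comp] at e2
    show pre y w.length = w
    have hinj : Function.Injective (some : A → Option A) := Option.some_injective A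
    exact (List.map_injective_iff.mpr hinj e2.symm)

theorem approxSet_open (hA : Nonempty A) {U : Set (ℕ → A)} (hU : IsOpen U) :
    ∃ G ∈ SigmaFin (ℕ → Option A) 2, ApproxSet U = Edom A ∩ G := by
  refine ⟨⋃ w : {w : List A // Cyl w ⊆ U}, ⋃ N, StabSet A w.1.length N (w.1.map some),
    ?_, ?_⟩
  · have h : (⋃ w : {w : List A // Cyl w ⊆ U}, ⋃ N, StabSet A w.1.length N (w.1.map some))
        = ⋃ q : {w : List A // Cyl w ⊆ U} × ℕ, StabSet A q.1.1.length q.2 (q.1.1.map some) := by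
      ext x; simp [Set.mem_iUnion]
    rw [h]
    exact sigmaFin_iUnion _ (fun _ => 1) 0 (fun _ => le_refl 1)
      (fun _ => by show (1:ℕ) ≤ 1; omega)
      (fun q => mem_sigmaFin_one (isClosed_StabSet _ _ _).isOpen_compl)
  · conv_lhs => rw [open_eq_iUnion_cyl hU]
    rw [approxSet_iUnion]
    ext x
    simp only [approxSet_cyl hA, Set.mem_iUnion, Set.mem_inter_iff]
    tauto

theorem approxSet_sigmaFin (hA : Nonempty A) :
    ∀ m, 1 ≤ m → ∀ S ∈ SigmaFin (ℕ → A) m,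
      ∃ G ∈ SigmaFin (ℕ → Option A) (m + 1), ApproxSet S = Edom A ∩ G := by
  intro m
  induction m using Nat.strong_induction_on with
  | _ m IH =>
    rcases m with _ | m
    · omega
    rcases m with _ | M
    · intro _ S hS
      exact approxSet_open hA (isOpen_of_mem_sigmaFin_one hS)
    · intro _ S hS
      rw [sigmaFin_add_two] at hS
      obtain ⟨f, lv, hf, rfl⟩ := hS
      have hIH : ∀ k, ∃ G ∈ SigmaFin (ℕ → Option A) ((lv k : ℕ) + 1),
          ApproxSet (f k)ᶜ = Edom A ∩ G :=
        fun k => IH (lv k) (lv k).isLt ((hf k).1) _ (hf k).2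
      choose G hG1 hG2 using hIH
      refine ⟨⋃ k, (G k)ᶜ, ?_, ?_⟩
      · exact sigmaFin_iUnion _ (fun k => (lv k : ℕ) + 1) (M + 1)
          (fun k => by show 1 ≤ (lv k : ℕ) + 1; omega)
          (fun k => by show (lv k : ℕ) + 1 ≤ M + 1 + 1; have := (lv k).isLt; omega)
          (fun k => by rw [compl_compl]; exact hG1 k)
      · rw [approxSet_iUnion]
        have hk : ∀ k, ApproxSet (f k) = Edom A ∩ (G k)ᶜ := by
          intro k
          have h1 : ApproxSet (((f k)ᶜ)ᶜ) = Edom A \ ApproxSet ((f k)ᶜ) :=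
            approxSet_compl hA _
          rw [compl_compl] at h1
          rw [h1, hG2 k]
          ext x
          simp only [Set.mem_diff, Set.mem_inter_iff, Set.mem_compl_iff]
          tauto
        ext x
        simp only [Set.mem_iUnion, Set.mem_inter_iff, hk, Set.mem_compl_iff]
        tauto

theorem edom_compl_sigma3 : (Edom A)ᶜ ∈ SigmaFin (ℕ → Option A) 3 := by
  have hDconv : (Dconv A)ᶜ = ⋃ k : ℕ,
      (⋃ q : ℕ × {w : List (Option A) // w.length = k}, StabSet A k q.1 q.2.1)ᶜ := by
    rw [← Set.compl_iInter]
    congr 1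
    ext x
    simp only [Dconv, Set.mem_iInter, Set.mem_setOf_eq, Set.mem_iUnion, Prod.exists,
      Subtype.exists]
    constructor
    · intro h k; obtain ⟨N, w, h1, h2⟩ := h k; exact ⟨N, w, h1, h2⟩
    · intro h k; obtain ⟨N, w, h1, h2⟩ := h k; exact ⟨N, w, h1, h2⟩
  have hmain : (Edom A)ᶜ = ⋃ o : Unit ⊕ ℕ,
      (Sum.elim (fun _ => (Ddef A)ᶜ)
        (fun k => (⋃ q : ℕ × {w : List (Option A) // w.length = k},
          StabSet A k q.1 q.2.1)ᶜ) o) := by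
    rw [Set.iUnion_sum]
    simp only [Sum.elim_inl, Sum.elim_inr]
    rw [Set.iUnion_const]
    rw [Edom, Set.compl_inter, hDconv]
  rw [hmain]
  refine sigmaFin_iUnion _ (fun _ => 2) 1 (fun _ => by show (1:ℕ) ≤ 2; omega)
    (fun _ => by show (2:ℕ) ≤ 1 + 1; omega) ?_
  rintro (u | k)
  · simp only [Sum.elim_inl, compl_compl]
    exact sigmaFin_closed isClosed_Ddef 0
  · simp only [Sum.elim_inr, compl_compl]
    refine sigmaFin_iUnion _ (fun _ => 1) 0 (fun _ => le_refl 1)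
      (fun _ => by show (1:ℕ) ≤ 1; omega)
      (fun q => mem_sigmaFin_one (isClosed_StabSet _ _ _).isOpen_compl)

theorem approxSet_piFin
    (hA : Nonempty A) {n : ℕ} (hn : 2 ≤ n) {X : Set (ℕ → A)}
    (hX : X ∈ PiFin (ℕ → A) n) : ApproxSet X ∈ PiFin (ℕ → Option A) (n + 1) := by
  have hXc : Xᶜ ∈ SigmaFin (ℕ → A) n := hX
  obtain ⟨G, hG1, hG2⟩ := approxSet_sigmaFin hA n (by omega) _ hXc
  have h1 : ApproxSet X = Edom A ∩ Gᶜ := by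
    have h2 : ApproxSet ((Xᶜ)ᶜ) = Edom A \ ApproxSet (Xᶜ) := approxSet_compl hA _
    rw [compl_compl] at h2
    rw [h2, hG2]
    ext x
    simp only [Set.mem_diff, Set.mem_inter_iff, Set.mem_compl_iff]
    tauto
  show (ApproxSet X)ᶜ ∈ SigmaFin _ (n+1)
  rw [h1]
  have h3 : (Edom A ∩ Gᶜ)ᶜ = (Edom A)ᶜ ∪ G := by
    rw [Set.compl_inter, compl_compl]
  rw [h3]
  obtain ⟨M, rfl⟩ : ∃ M, n = M + 2 := ⟨n - 2, by omega⟩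
  exact sigmaFin_union (sigmaFin_mono (by omega) (by omega) edom_compl_sigma3) hG1

end PartOne

/-! #### Part 2 : the jump lemma -/

section Jump

open Classical in
noncomputable def embG {B : Type} (G : ℕ → Set (ℕ → B)) (x : ℕ → B) : ℕ → B × Bool :=
  fun i => (x i, if x ∈ G i then true else false)

theorem embG_snd_iff {B : Type} (G : ℕ → Set (ℕ → B)) (x : ℕ → B) (i : ℕ) :
    ((embG G x i).2 = false) ↔ x ∉ G i := by
  simp only [embG]
  by_cases h : x ∈ G i <;> simp [h]

def fstMap {B : Type} (w : ℕ → B × Bool) : ℕ → B := fun i => (w i).1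

theorem continuous_fstMap {B : Type} [TopologicalSpace B] :
    Continuous (fstMap (B := B)) :=
  continuous_pi fun i => continuous_fst.comp (continuous_apply i)

def rMap {B : Type} (k : ℕ) (w : ℕ → B × Bool) : ℕ → B × Bool :=
  fun e => ((w e).1, (w (Nat.pair k e)).2)

theorem continuous_rMap {B : Type} [TopologicalSpace B] (k : ℕ) :
    Continuous (rMap (B := B) k) :=
  continuous_pi fun e => Continuous.prodMk (continuous_fst.comp (continuous_apply e))
    (continuous_snd.comp (continuous_apply (Nat.pair k e)))

theorem fstMap_embG {B : Type} (G : ℕ → Set (ℕ → B)) (x : ℕ → B) :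
    fstMap (embG G x) = x := rfl

theorem rMap_embG {B : Type} (Gk : ℕ → ℕ → Set (ℕ → B)) (k : ℕ) (x : ℕ → B) :
    rMap k (embG (fun n => Gk n.unpair.1 n.unpair.2) x) = embG (Gk k) x := by
  funext e
  simp only [rMap, embG, Nat.unpair_pair]

theorem jump {B : Type} [TopologicalSpace B] [DiscreteTopology B] :
    ∀ m, 1 ≤ m → ∀ S ∈ SigmaFin (ℕ → B) (m+1),
      ∃ (G : ℕ → Set (ℕ → B)) (S' : Set (ℕ → B × Bool)),
        (∀ e, IsOpen (G e)) ∧ S' ∈ SigmaFin (ℕ → B × Bool) m ∧ S = embG G ⁻¹' S' := by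
  intro m
  induction m using Nat.strong_induction_on with
  | _ m IH =>
    rcases m with _ | m
    · omega
    rcases m with _ | M
    · intro _ S hS
      rw [sigmaFin_add_two] at hS
      obtain ⟨f, lv, hf, rfl⟩ := hS
      have hopen : ∀ k, IsOpen (f k)ᶜ := by
        intro k
        have h1 := (hf k).2
        have h2 : (lv k : ℕ) = 1 := by have := (lv k).isLt; have := (hf k).1; omega
        rw [h2] at h1
        exact isOpen_of_mem_sigmaFin_one h1
      refine ⟨fun k => (f k)ᶜ, ⋃ k, {w : ℕ → B × Bool | (w k).2 = false}, hopen, ?_, ?_⟩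
      · apply mem_sigmaFin_one
        apply isOpen_iUnion
        intro k
        have h : {w : ℕ → B × Bool | (w k).2 = false}
            = (fun w : ℕ → B × Bool => (w k).2) ⁻¹' {false} := by
          ext w; simp
        rw [h]
        exact IsOpen.preimage (continuous_snd.comp (continuous_apply k))
          (isOpen_discrete ({false} : Set Bool))
      · ext x
        simp only [Set.mem_iUnion, Set.mem_preimage, Set.mem_setOf_eq,
          embG_snd_iff, Set.mem_compl_iff, not_not]
    · intro _ S hS
      rw [sigmaFin_add_two] at hS
      obtain ⟨f, lv, hf, rfl⟩ := hS
      have hk : ∀ k, ∃ (Gk : ℕ → Set (ℕ → B)) (Tk : Set (ℕ → B × Bool)),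
          (∀ e, IsOpen (Gk e)) ∧
          (Tk)ᶜ ∈ SigmaFin (ℕ → B × Bool) (max 1 ((lv k : ℕ) - 1)) ∧
          f k = embG Gk ⁻¹' Tk := by
        intro k
        by_cases h1 : (lv k : ℕ) = 1
        · have h2 := (hf k).2
          rw [h1] at h2
          have hcl : IsOpen (f k)ᶜ := isOpen_of_mem_sigmaFin_one h2
          refine ⟨fun _ => ∅, fstMap ⁻¹' (f k), fun _ => isOpen_empty, ?_, ?_⟩
          · have h3 : (fstMap (B := B) ⁻¹' (f k))ᶜ = fstMap ⁻¹' ((f k)ᶜ) := by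
              rw [Set.preimage_compl]
            have h4 : max 1 ((lv k : ℕ) - 1) = 1 := by rw [h1]; simp
            rw [h3, h4]
            exact mem_sigmaFin_one (hcl.preimage continuous_fstMap)
          · ext x
            simp only [Set.mem_preimage, fstMap_embG]
        · have hlv2 : 2 ≤ (lv k : ℕ) := by have := (hf k).1; omega
          have hlt : (lv k : ℕ) - 1 < M + 2 := by have := (lv k).isLt; omega
          have hnum : (lv k : ℕ) - 1 + 1 = (lv k : ℕ) := by omega
          obtain ⟨Gk, S'k, hG, hS', heq⟩ := IH ((lv k : ℕ) - 1) hlt (by omega) _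
            (by rw [hnum]; exact (hf k).2)
          refine ⟨Gk, (S'k)ᶜ, hG, ?_, ?_⟩
          · rw [compl_compl]
            have h4 : max 1 ((lv k : ℕ) - 1) = (lv k : ℕ) - 1 := by omega
            rw [h4]
            exact hS'
          · rw [Set.preimage_compl, ← heq, compl_compl]
      choose Gk Tk hGk hTk hfk using hk
      refine ⟨fun n => Gk n.unpair.1 n.unpair.2, ⋃ k, rMap k ⁻¹' (Tk k),
        fun e => hGk _ _, ?_, ?_⟩
      · show (⋃ k, rMap k ⁻¹' (Tk k)) ∈ SigmaFin (ℕ → B × Bool) (M + 2)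
        refine sigmaFin_iUnion _ (fun k => max 1 ((lv k : ℕ) - 1)) (M)
          (fun k => by show 1 ≤ max 1 ((lv k : ℕ) - 1); omega)
          (fun k => by
            show max 1 ((lv k : ℕ) - 1) ≤ M + 1
            have := (lv k).isLt; omega)
          (fun k => ?_)
        rw [← Set.preimage_compl]
        exact sigmaFin_preimage (continuous_rMap k) _ _ (hTk k)
      · rw [Set.preimage_iUnion]
        ext x
        simp only [Set.mem_iUnion, Set.mem_preimage]
        apply exists_congr
        intro k
        rw [rMap_embG Gk k x]
        constructor
        · intro hx
          have := hfk k ▸ hx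
          exact this
        · intro hx
          rw [hfk k]
          exact hx

end Jump

/-! #### Part 2 : the eraser machine -/

section Machine

attribute [local instance] Classical.propDecidable

theorem continuous_of_locally_determined {C D' : Type*} [TopologicalSpace C]
    [DiscreteTopology C] [TopologicalSpace D'] {f : (ℕ → C) → (ℕ → D')}
    (h : ∀ i, ∃ m, ∀ x y, pre x m = pre y m → f x i = f y i) : Continuous f := by
  apply continuous_pi
  intro i
  obtain ⟨m, hm⟩ := h i
  rw [continuous_def]
  intro s _
  have heq : (fun x => f x i) ⁻¹' s
      = {x | ∃ x₀ : ℕ → C, pre x₀ m = pre x m ∧ f x₀ i ∈ s} := by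
    ext x
    simp only [Set.mem_preimage, Set.mem_setOf_eq]
    constructor
    · intro hx; exact ⟨x, rfl, hx⟩
    · rintro ⟨x₀, hpre, hs⟩
      rw [hm x x₀ hpre.symm]
      exact hs
  rw [heq]
  exact isOpen_prefixSet m (fun v => ∃ x₀ : ℕ → C, pre x₀ m = v ∧ f x₀ i ∈ s)

variable {D : Type} [TopologicalSpace D] [DiscreteTopology D]
variable {A : Type} [DecidableEq A] [TopologicalSpace A] [DiscreteTopology A]

/-- `u` determines the first `k` letters of the `g`-image of any extension. -/
def ExtAgree (g : (ℕ → D) → (ℕ → A)) (u : List D) (k : ℕ) : Prop :=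
  ∀ y y' : ℕ → D, pre y u.length = u → pre y' u.length = u →
    pre (g y) k = pre (g y') k

noncomputable def detlen (g : (ℕ → D) → (ℕ → A)) (u : List D) : ℕ :=
  Nat.findGreatest (fun k => ExtAgree g u k) u.length

def extD (c₀ : D) (u : List D) : ℕ → D := fun i => u.getD i c₀

theorem pre_extD (c₀ : D) (u : List D) : pre (extD c₀ u) u.length = u := by
  apply List.ext_getElem
  · simp [pre_length]
  · intro i h1 h2
    rw [pre_getElem _ (by simpa [pre_length] using h1)]
    exact List.getD_eq_getElem u c₀ h2

noncomputable def det (g : (ℕ → D) → (ℕ → A)) (c₀ : D) (u : List D) : List A :=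
  pre (g (extD c₀ u)) (detlen g u)

theorem det_extends (g : (ℕ → D) → (ℕ → A)) (c₀ : D) {z : ℕ → D} {k m : ℕ}
    (hmod : ∀ y, pre y m = pre z m → pre (g y) k = pre (g z) k)
    {u : List D} (hu : pre z m <+: u) (hlen : k ≤ u.length) :
    pre (g z) k <+: det g c₀ u := by
  have hm : m ≤ u.length := by
    have := hu.length_le
    simpa [pre_length] using this
  have hagree : ExtAgree g u k := by
    intro y y' hy hy'
    have hym : pre y m = pre z m := by
      rw [← pre_take y hm, hy, ← take_of_prefix hu, pre_length]
    have hy'm : pre y' m = pre z m := by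
      rw [← pre_take y' hm, hy', ← take_of_prefix hu, pre_length]
    rw [hmod y hym, hmod y' hy'm]
  have hdl : k ≤ detlen g u := Nat.le_findGreatest hlen hagree
  have h1 : pre (g (extD c₀ u)) k = pre (g z) k := by
    apply hmod
    rw [← pre_take (extD c₀ u) hm, pre_extD, ← take_of_prefix hu, pre_length]
  rw [← h1]
  unfold det
  rw [← pre_take (g (extD c₀ u)) hdl]
  exact List.take_prefix _ _

theorem exists_modulus {g : (ℕ → D) → (ℕ → A)} (hg : Continuous g) (z : ℕ → D) (k : ℕ) :
    ∃ m, ∀ y, pre y m = pre z m → pre (g y) k = pre (g z) k := by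
  have hU : IsOpen {y : ℕ → D | pre (g y) k = pre (g z) k} := by
    have h : {y : ℕ → D | pre (g y) k = pre (g z) k}
        = g ⁻¹' {w : ℕ → A | pre w k = pre (g z) k} := rfl
    rw [h]
    exact (isOpen_prefixSet k (fun v => v = pre (g z) k)).preimage hg
  exact exists_prefix_subset hU rfl

variable {B : Type} [TopologicalSpace B] [DiscreteTopology B]
variable (G : ℕ → Set (ℕ → B)) (g : (ℕ → B × Bool) → ℕ → A) (c₀ : B × Bool) (a₀ : A)

noncomputable def bitW (i : ℕ) (v : List B) : Bool :=
  if ∀ y : ℕ → B, pre y v.length = v → y ∈ G i then true else false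

noncomputable def uw (x : ℕ → B) (p : ℕ) : List (B × Bool) :=
  (List.range p).map fun i => (x i, bitW G i (pre x p))

theorem uw_length (x : ℕ → B) (p : ℕ) : (uw G x p).length = p := by simp [uw]

noncomputable def Oseq (x : ℕ → B) (p : ℕ) : List A := det g c₀ (uw G x p)

noncomputable def Oprev (x : ℕ → B) : ℕ → List A
  | 0 => []
  | (p+1) => Oseq G g c₀ x p

noncomputable def mvb (x : ℕ → B) (p : ℕ) : List (Option A) :=
  blockOf a₀ (Oprev G g c₀ x p) (Oseq G g c₀ x p)

noncomputable def Fw (x : ℕ → B) : ℕ → List (Option A)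
  | 0 => []
  | (p+1) => Fw x p ++ mvb G g c₀ a₀ x p

noncomputable def fM (x : ℕ → B) : ℕ → Option A :=
  fun i => (Fw G g c₀ a₀ x (i+1)).getD i (some a₀)

theorem Fw_length_ge (x : ℕ → B) : ∀ p, p ≤ (Fw G g c₀ a₀ x p).length := by
  intro p
  induction p with
  | zero => simp [Fw]
  | succ p ih =>
    show p + 1 ≤ (Fw G g c₀ a₀ x p ++ mvb G g c₀ a₀ x p).length
    rw [List.length_append]
    have := blockOf_length_pos a₀ (Oprev G g c₀ x p) (Oseq G g c₀ x p)
    have h2 : 0 < (mvb G g c₀ a₀ x p).length := this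
    omega

theorem Fw_prefix (x : ℕ → B) {p q : ℕ} (h : p ≤ q) :
    Fw G g c₀ a₀ x p <+: Fw G g c₀ a₀ x q := by
  induction h with
  | refl => exact List.prefix_refl _
  | step h ih =>
    refine ih.trans ?_
    exact List.prefix_append _ _

theorem Fw_length_mono (x : ℕ → B) {p q : ℕ} (h : p ≤ q) :
    (Fw G g c₀ a₀ x p).length ≤ (Fw G g c₀ a₀ x q).length :=
  (Fw_prefix G g c₀ a₀ x h).length_le

theorem getD_of_prefix {α : Type*} {l l' : List α} (h : l <+: l') {i : ℕ}
    (hi : i < l.length) (d : α) : l.getD i d = l'.getD i d := by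
  obtain ⟨t, rfl⟩ := h
  rw [List.getD_eq_getElem _ _ hi,
    List.getD_eq_getElem _ _ (by rw [List.length_append]; omega)]
  rw [List.getElem_append_left hi]

theorem pre_fM (x : ℕ → B) {q p : ℕ} (h : q ≤ (Fw G g c₀ a₀ x p).length) :
    pre (fM G g c₀ a₀ x) q = (Fw G g c₀ a₀ x p).take q := by
  apply List.ext_getElem
  · simp only [pre_length, List.length_take]
    omega
  · intro i h1 h2
    have hi : i < q := by simpa [pre_length] using h1
    have hip : i < (Fw G g c₀ a₀ x p).length := by omega
    rw [pre_getElem _ hi]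
    have hcases : fM G g c₀ a₀ x i = (Fw G g c₀ a₀ x p).getD i (some a₀) := by
      unfold fM
      rcases le_total (i+1) p with hle | hle
      · exact getD_of_prefix (Fw_prefix G g c₀ a₀ x hle)
          (by have := Fw_length_ge G g c₀ a₀ x (i+1); omega) _
      · exact (getD_of_prefix (Fw_prefix G g c₀ a₀ x hle) hip _).symm
    rw [hcases, List.getD_eq_getElem _ _ hip]
    simp

theorem stage_decomp (x : ℕ → B) (q : ℕ) :
    ∃ p, (Fw G g c₀ a₀ x p).length ≤ q ∧ q < (Fw G g c₀ a₀ x (p+1)).length ∧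
      pre (fM G g c₀ a₀ x) q
        = Fw G g c₀ a₀ x p
          ++ (mvb G g c₀ a₀ x p).take (q - (Fw G g c₀ a₀ x p).length) := by
  set p := Nat.findGreatest (fun p => (Fw G g c₀ a₀ x p).length ≤ q) (q+1) with hp
  have h0 : (Fw G g c₀ a₀ x 0).length ≤ q := by simp [Fw]
  have hle : (Fw G g c₀ a₀ x p).length ≤ q :=
    Nat.findGreatest_spec (P := fun p => (Fw G g c₀ a₀ x p).length ≤ q)
      (m := 0) (by omega) h0
  have hq1 : p ≤ q + 1 := Nat.findGreatest_le _
  have hgt : q < (Fw G g c₀ a₀ x (p+1)).length := by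
    by_contra hcon
    push_neg at hcon
    have hlt : p + 1 ≤ q + 1 := by
      have := Fw_length_ge G g c₀ a₀ x (p+1)
      omega
    have hgreat := Nat.findGreatest_is_greatest
      (P := fun p => (Fw G g c₀ a₀ x p).length ≤ q)
      (Nat.lt_succ_of_le (le_refl p)) hlt
    exact hgreat hcon
  refine ⟨p, hle, hgt, ?_⟩
  rw [pre_fM G g c₀ a₀ x (le_of_lt hgt)]
  show (Fw G g c₀ a₀ x p ++ mvb G g c₀ a₀ x p).take q = _
  rw [List.take_append, List.take_of_length_le hle]

theorem fw_state (x : ℕ → B) : ∀ p,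
    (Fw G g c₀ a₀ x p).foldl (eraseStep (none : Option A)) (some [])
      = some (stk (Oprev G g c₀ x p)) := by
  intro p
  induction p with
  | zero => rfl
  | succ p ih =>
    show (Fw G g c₀ a₀ x p ++ mvb G g c₀ a₀ x p).foldl _ _ = some (stk (Oseq G g c₀ x p))
    rw [List.foldl_append, ih]
    exact block_final a₀ _ _

theorem erase_state (x : ℕ → B) (q : ℕ) (w : List A)
    (hw : ∀ p, (Fw G g c₀ a₀ x p).length ≤ q → q < (Fw G g c₀ a₀ x (p+1)).length →
      (w <+: Oprev G g c₀ x p ∧ w <+: Oseq G g c₀ x p)) :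
    ∃ u, w <+: u ∧
      finErase (none : Option A) (pre (fM G g c₀ a₀ x) q) = some (u.map some) := by
  obtain ⟨p, h1, h2, h3⟩ := stage_decomp G g c₀ a₀ x q
  obtain ⟨hwp, hwp'⟩ := hw p h1 h2
  obtain ⟨u, hu1, hu2⟩ := block_inter a₀ _ _ w hwp hwp' (q - (Fw G g c₀ a₀ x p).length)
  refine ⟨u, hu1, ?_⟩
  rw [h3]
  unfold finErase
  rw [List.foldl_append, fw_state G g c₀ a₀ x p]
  unfold mvb
  rw [hu2]
  simp [stk]

theorem bitW_stab (hGopen : ∀ e, IsOpen (G e)) (x : ℕ → B) (i : ℕ) :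
    ∃ N, ∀ p ≥ N, bitW G i (pre x p) = (if x ∈ G i then true else false) := by
  by_cases hx : x ∈ G i
  · obtain ⟨m, hm⟩ := exists_prefix_subset (hGopen i) hx
    refine ⟨m, fun p hp => ?_⟩
    rw [if_pos hx]
    unfold bitW
    rw [if_pos]
    intro y hy
    rw [pre_length] at hy
    exact hm y (pre_agree_mono hp hy)
  · refine ⟨0, fun p _ => ?_⟩
    rw [if_neg hx]
    unfold bitW
    rw [if_neg]
    intro hcl
    exact hx (hcl x (by rw [pre_length]))

theorem uw_stab (hGopen : ∀ e, IsOpen (G e)) (x : ℕ → B) (m : ℕ) :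
    ∃ N, ∀ p ≥ N, pre (embG G x) m <+: uw G x p := by
  have h : ∀ i, ∃ N, ∀ p ≥ N, bitW G i (pre x p) = (if x ∈ G i then true else false) :=
    fun i => bitW_stab G hGopen x i
  choose Nf hNf using h
  refine ⟨max m ((Finset.range m).sup Nf), fun p hp => ?_⟩
  have hm : m ≤ p := le_trans (le_max_left _ _) hp
  have hlen : (pre (embG G x) m).length = m := pre_length _ _
  rw [List.prefix_iff_eq_take, hlen]
  have htk : (uw G x p).take m
      = (List.range m).map fun i => (x i, bitW G i (pre x p)) := by
    unfold uw
    rw [← List.map_take, List.take_range, min_eq_left hm]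
  rw [htk]
  apply List.ext_getElem
  · simp [pre_length]
  · intro i h1 h2
    have hi : i < m := by simpa [pre_length] using h1
    rw [pre_getElem _ hi]
    simp only [List.getElem_map, List.getElem_range]
    unfold embG
    have hNi : Nf i ≤ p := by
      refine le_trans ?_ (le_trans (le_max_right _ _) hp)
      exact Finset.le_sup (Finset.mem_range.mpr hi)
    rw [hNf i p hNi]

theorem Oseq_stab (hGopen : ∀ e, IsOpen (G e)) (hg : Continuous g) (x : ℕ → B) (k : ℕ) :
    ∃ P, ∀ p ≥ P, pre (g (embG G x)) k <+: Oseq G g c₀ x p := by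
  obtain ⟨m, hm⟩ := exists_modulus hg (embG G x) k
  obtain ⟨N, hN⟩ := uw_stab G hGopen x m
  refine ⟨max k N, fun p hp => ?_⟩
  refine det_extends g c₀ hm (hN p (le_trans (le_max_right _ _) hp)) ?_
  rw [uw_length]
  exact le_trans (le_max_left _ _) hp

theorem erasesTo_fM (hGopen : ∀ e, IsOpen (G e)) (hg : Continuous g) (x : ℕ → B) :
    ErasesTo (none : Option A) (fM G g c₀ a₀ x) (fun i => some (g (embG G x) i)) := by
  constructor
  · intro q
    obtain ⟨u, _, heq⟩ := erase_state G g c₀ a₀ x q []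
      (fun p _ _ => ⟨List.nil_prefix, List.nil_prefix⟩)
    rw [heq]
    rfl
  · intro k
    obtain ⟨P, hP⟩ := Oseq_stab G g c₀ hGopen hg x k
    refine ⟨(Fw G g c₀ a₀ x (P+1)).length, fun q hq => ?_⟩
    have hw : ∀ p, (Fw G g c₀ a₀ x p).length ≤ q → q < (Fw G g c₀ a₀ x (p+1)).length →
        (pre (g (embG G x)) k <+: Oprev G g c₀ x p
          ∧ pre (g (embG G x)) k <+: Oseq G g c₀ x p) := by
      intro p h1 h2
      have hPp : P + 1 ≤ p := by
        by_contra hcon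
        push_neg at hcon
        have := Fw_length_mono G g c₀ a₀ x (show p + 1 ≤ P + 1 by omega)
        omega
      constructor
      · obtain ⟨p', rfl⟩ : ∃ p', p = p' + 1 := ⟨p - 1, by omega⟩
        show _ <+: Oseq G g c₀ x p'
        exact hP p' (by omega)
      · exact hP p (by omega)
    obtain ⟨u, hu, heq⟩ := erase_state G g c₀ a₀ x q _ hw
    intro l hl
    rw [heq] at hl
    injection hl with hl
    rw [← hl]
    rw [← List.map_take, pre_comp]
    congr 1
    have hlen : (pre (g (embG G x)) k).length = k := pre_length _ _
    have htk := take_of_prefix hu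
    rw [hlen] at htk
    exact htk

theorem Fw_determined (x x' : ℕ → B) :
    ∀ p, pre x p = pre x' p → Fw G g c₀ a₀ x p = Fw G g c₀ a₀ x' p := by
  intro p
  induction p with
  | zero => intro _; rfl
  | succ p ih =>
    intro h
    have hp : pre x p = pre x' p := pre_agree_mono (by omega) h
    show Fw G g c₀ a₀ x p ++ mvb G g c₀ a₀ x p
        = Fw G g c₀ a₀ x' p ++ mvb G g c₀ a₀ x' p
    rw [ih hp]
    congr 1
    have huw : ∀ r ≤ p, uw G x r = uw G x' r := by
      intro r hr
      have hxr : pre x r = pre x' r := pre_agree_mono (by omega) h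
      unfold uw
      apply List.map_congr_left
      intro i hi
      have hir : i < r := List.mem_range.mp hi
      rw [pre_eq_iff.mp hxr i hir, hxr]
    have hOs : ∀ r ≤ p, Oseq G g c₀ x r = Oseq G g c₀ x' r := by
      intro r hr
      unfold Oseq
      rw [huw r hr]
    unfold mvb
    rcases p with _ | p'
    · show blockOf a₀ [] (Oseq G g c₀ x 0) = blockOf a₀ [] (Oseq G g c₀ x' 0)
      rw [hOs 0 (le_refl _)]
    · show blockOf a₀ (Oseq G g c₀ x p') (Oseq G g c₀ x (p'+1))
          = blockOf a₀ (Oseq G g c₀ x' p') (Oseq G g c₀ x' (p'+1))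
      rw [hOs p' (by omega), hOs (p'+1) (le_refl _)]

theorem continuous_fM : Continuous (fM G g c₀ a₀) := by
  apply continuous_of_locally_determined
  intro i
  refine ⟨i+1, fun x x' h => ?_⟩
  unfold fM
  rw [Fw_determined G g c₀ a₀ x x' (i+1) h]

end Machine

end ErAux


/-- Let `A` be a finite alphabet, `n ≥ 2`, and `X ⊆ A^ω` a
`Π^0_n`-complete set. Then `X^≈` is a `Π^0_{n+1}`-complete subset of `(A ∪ {◁})^ω`. -/
theorem approxSet_piComplete_step (A : Type) [Fintype A] [DecidableEq A]
    [TopologicalSpace A] [DiscreteTopology A] (n : ℕ) (hn : 2 ≤ n)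
    (X : Set (ℕ → A)) (hX : PiFinComplete n X) :
    PiFinComplete (n + 1) (ApproxSet X) := by
  have hA : Nonempty A := by
    have huniv : (Set.univ : Set (ℕ → Bool)) ∈ PiFin (ℕ → Bool) n := by
      show (Set.univ : Set (ℕ → Bool))ᶜ ∈ SigmaFin (ℕ → Bool) n
      rw [Set.compl_univ]
      obtain ⟨M, rfl⟩ : ∃ M, n = M + 2 := ⟨n - 2, by omega⟩
      exact ErAux.sigmaFin_empty M
    obtain ⟨f, _, _⟩ := hX.2 Bool Set.univ huniv
    exact ⟨f (fun _ => false) 0⟩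
  constructor
  · exact ErAux.approxSet_piFin hA hn hX.1
  · intro B _ _ _ T hT
    rcases isEmpty_or_nonempty B with hB | hB
    · haveI : IsEmpty (ℕ → B) := ⟨fun x => (hB.false (x 0))⟩
      refine ⟨fun x => isEmptyElim x, ?_, ?_⟩
      · refine continuous_def.mpr fun s _ => ?_
        have h : (fun x : ℕ → B => (isEmptyElim x : ℕ → Option A)) ⁻¹' s = ∅ := by
          ext x; exact isEmptyElim x
        rw [h]
        exact isOpen_empty
      · ext x; exact isEmptyElim x
    · obtain ⟨b₀⟩ := hB
      obtain ⟨a₀⟩ := hA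
      have hTc : Tᶜ ∈ SigmaFin (ℕ → B) (n + 1) := hT
      obtain ⟨G, S', hGopen, hS', hTeq⟩ := ErAux.jump n (by omega) Tᶜ hTc
      have hY : S'ᶜ ∈ PiFin (ℕ → B × Bool) n := by
        show (S'ᶜ)ᶜ ∈ SigmaFin (ℕ → B × Bool) n
        rw [compl_compl]; exact hS'
      obtain ⟨g, hg, hYg⟩ := hX.2 (B × Bool) (S'ᶜ) hY
      refine ⟨ErAux.fM G g (b₀, true) a₀, ErAux.continuous_fM G g _ a₀, ?_⟩
      ext x
      have hET := ErAux.erasesTo_fM G g (b₀, true) a₀ hGopen hg x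
      constructor
      · intro hx
        have h1 : x ∉ Tᶜ := fun h => h hx
        rw [hTeq] at h1
        have h2 : ErAux.embG G x ∈ S'ᶜ := h1
        have h3 : g (ErAux.embG G x) ∈ X := by
          have := hYg ▸ h2
          exact this
        exact ⟨g (ErAux.embG G x), hET, h3⟩
      · rintro ⟨y, hy, hyX⟩
        have h1 : (fun i => some (y i)) = (fun i => some (g (ErAux.embG G x) i)) :=
          ErAux.erasesTo_unique hy hET
        have h2 : y = g (ErAux.embG G x) :=
          funext fun i => Option.some_injective A (congrFun h1 i)
        rw [h2] at hyX
        have h3 : ErAux.embG G x ∈ S'ᶜ := by rw [hYg]; exact hyX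
        by_contra hxT
        have h4 : x ∈ Tᶜ := hxT
        rw [hTeq] at h4
        exact h3 h4
end

section
/- Fix a letter 0 ∈ A. The function f : (A ∪ {◁})^ω → A^ω defined by f(x) = x^◁ if x^◁ is defined and infinite, and f(x) = 0^ω if x^◁ is finite or undefined, is Borel measurable (the preimage of every open subset of A^ω is a Borel subset of (A ∪ {◁})^ω). -/
open Set MeasureTheory

/-! ### Auxiliary lemmas for Statement 1 -/

section Aux1

variable {A : Type} [Fintype A] [DecidableEq A] [TopologicalSpace A] [DiscreteTopology A]

lemma pre_length {C : Type*} (x : ℕ → C) (p : ℕ) : (pre x p).length = p := by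
  simp [pre]

lemma pre_eq_pre_iff {C : Type*} (f g : ℕ → C) (k : ℕ) :
    pre f k = pre g k ↔ ∀ i < k, f i = g i := by
  unfold pre; rw [List.map_inj_left]; simp

lemma pre_getElem? {C : Type*} (f : ℕ → C) (k i : ℕ) (h : i < k) :
    (pre f k)[i]? = some (f i) := by
  simp [pre, List.getElem?_map, List.getElem?_range, h]

lemma getElem?_of_take_eq_pre {C : Type*} {l : List C} {f : ℕ → C} {k i : ℕ}
    (h : l.take k = pre f k) (hik : i < k) : l[i]? = some (f i) := by
  have h1 : (l.take k)[i]? = some (f i) := by rw [h]; exact pre_getElem? f k i hik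
  rwa [List.getElem?_take, if_pos hik] at h1

/-- Uniqueness of the infinite value of the eraser evaluation. -/
lemma erasesTo_unique {x : ℕ → Option A} {y y' : ℕ → A}
    (h : ErasesTo (none : Option A) x (fun i => some (y i)))
    (h' : ErasesTo (none : Option A) x (fun i => some (y' i))) : y = y' := by
  funext i
  obtain ⟨N, hN⟩ := h.2 (i + 1)
  obtain ⟨N', hN'⟩ := h'.2 (i + 1)
  obtain ⟨l, hl⟩ := Option.isSome_iff_exists.mp (h.1 (max N N'))
  have e1 := hN (max N N') (le_max_left _ _) l hl
  have e2 := hN' (max N N') (le_max_right _ _) l hl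
  have := (pre_eq_pre_iff _ _ _).mp (e1.symm.trans e2) i (Nat.lt_succ_self i)
  exact Option.some_injective _ this

/-- The sequences `p ↦ (x[p])^◁` corresponding to `x` with `x^◁` defined and
infinite. -/
def DomSeq (A : Type) [DecidableEq A] : Set (ℕ → Option (List (Option A))) :=
  {u | (∀ n, (u n).isSome) ∧
    ∀ k : ℕ, ∃ N : ℕ, ∃ w : List A, w.length = k ∧
      ∀ p ≥ N, ∀ l, u p = some l → l.take k = w.map some}

/-- The sequences whose limit has `i`-th letter `a`. -/
def ValSeq (A : Type) [DecidableEq A] (i : ℕ) (a : A) :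
    Set (ℕ → Option (List (Option A))) :=
  {u | ∃ N, ∀ p ≥ N, ∀ l, u p = some l → l[i]? = some (some a)}

lemma mem_domSeq_iff (x : ℕ → Option A) :
    (fun p => finErase (none : Option A) (pre x p)) ∈ DomSeq A ↔
      ∃ y : ℕ → A, ErasesTo (none : Option A) x (fun i => some (y i)) := by
  constructor
  · rintro ⟨C1, C2⟩
    choose Nf wf hlen hw using C2
    have hcoh : ∀ j k, j ≤ k → wf j = (wf k).take j := by
      intro j k hjk
      obtain ⟨l, hl⟩ := Option.isSome_iff_exists.mp (C1 (max (Nf j) (Nf k)))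
      have e1 := hw j (max (Nf j) (Nf k)) (le_max_left _ _) l hl
      have e2 := hw k (max (Nf j) (Nf k)) (le_max_right _ _) l hl
      have : (wf j).map some = ((wf k).take j).map some := by
        rw [List.map_take, ← e2, ← e1, List.take_take, min_eq_left hjk]
      exact List.map_injective_iff.mpr (Option.some_injective A) this
    set y : ℕ → A := fun i => (wf (i + 1)).get ⟨i, by rw [hlen]; omega⟩ with hy
    have hwk : ∀ k, wf k = (List.range k).map y := by
      intro k
      apply List.ext_getElem
      · simp [hlen]
      · intro i h1 h2
        have hik : i < k := by simpa [hlen] using h1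
        have hc := hcoh (i + 1) k hik
        have h3 : (wf (i + 1))[i]? = (wf k)[i]? := by
          rw [hc, List.getElem?_take, if_pos (Nat.lt_succ_self i)]
        rw [List.getElem?_eq_getElem (show i < (wf (i + 1)).length by rw [hlen]; exact Nat.lt_succ_self i),
          List.getElem?_eq_getElem h1] at h3
        simp only [List.getElem_map, List.getElem_range, hy, List.get_eq_getElem]
        exact (Option.some.inj h3).symm
    refine ⟨y, C1, fun k => ⟨Nf k, fun p hp l hl => ?_⟩⟩
    rw [hw k p hp l hl, hwk k]
    unfold pre
    rw [List.map_map]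
    rfl
  · rintro ⟨y, h⟩
    refine ⟨h.1, fun k => ⟨(h.2 k).choose, (List.range k).map y, by simp, fun p hp l hl => ?_⟩⟩
    rw [(h.2 k).choose_spec p hp l hl]
    unfold pre
    rw [List.map_map]
    rfl

lemma mem_valSeq_iff {x : ℕ → Option A} {y : ℕ → A}
    (h : ErasesTo (none : Option A) x (fun i => some (y i))) (i : ℕ) (a : A) :
    (fun p => finErase (none : Option A) (pre x p)) ∈ ValSeq A i a ↔ y i = a := by
  constructor
  · rintro ⟨N, hN⟩
    obtain ⟨N', hN'⟩ := h.2 (i + 1)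
    obtain ⟨l, hl⟩ := Option.isSome_iff_exists.mp (h.1 (max N N'))
    have e1 := hN (max N N') (le_max_left _ _) l hl
    have e2 : l[i]? = some (some (y i)) :=
      getElem?_of_take_eq_pre (hN' (max N N') (le_max_right _ _) l hl) (Nat.lt_succ_self i)
    have : some (some a) = some (some (y i)) := e1.symm.trans e2
    simp only [Option.some.injEq] at this
    exact this.symm
  · rintro rfl
    obtain ⟨N, hN⟩ := h.2 (i + 1)
    exact ⟨N, fun p hp l hl =>
      getElem?_of_take_eq_pre (hN p hp l hl) (Nat.lt_succ_self i)⟩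

/-- Any coordinate-preimage is Borel in `(A ∪ {◁})^ω`. -/
lemma borel_eval_meas (i : ℕ) (s : Set (Option A)) :
    MeasurableSet[borel (ℕ → Option A)] ((fun x : ℕ → Option A => x i) ⁻¹' s) :=
  MeasurableSpace.measurableSet_generateFrom
    (IsOpen.preimage (continuous_apply i) (isOpen_discrete s))

lemma measurableSet_pre_eq (p : ℕ) (w : List (Option A)) :
    MeasurableSet[borel (ℕ → Option A)] {x : ℕ → Option A | pre x p = w} := by
  letI : MeasurableSpace (ℕ → Option A) := borel _
  by_cases hl : w.length = p
  · have : {x : ℕ → Option A | pre x p = w} =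
        ⋂ i ∈ Finset.range p, (fun x : ℕ → Option A => x i) ⁻¹' {c | w[i]? = some c} := by
      ext x
      simp only [Set.mem_iInter, Finset.mem_range, Set.mem_setOf_eq, Set.mem_preimage]
      constructor
      · rintro rfl i hi; exact pre_getElem? x p i hi
      · intro hx
        apply List.ext_getElem?
        intro i
        by_cases hi : i < p
        · rw [pre_getElem? x p i hi]; exact (hx i hi).symm
        · rw [List.getElem?_eq_none, List.getElem?_eq_none]
          · omega
          · rw [pre_length]; omega
    rw [this]
    exact MeasurableSet.biInter (Finset.range p).countable_toSet
      fun i _ => borel_eval_meas i _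
  · have : {x : ℕ → Option A | pre x p = w} = ∅ := by
      ext x
      simp only [Set.mem_setOf_eq, Set.mem_empty_iff_false, iff_false]
      intro hx
      exact hl (hx ▸ pre_length x p)
    rw [this]
    exact MeasurableSet.empty

lemma meas_finErase_pre (p : ℕ) (s : Set (Option (List (Option A)))) :
    MeasurableSet[borel (ℕ → Option A)]
      {x : ℕ → Option A | finErase (none : Option A) (pre x p) ∈ s} := by
  letI : MeasurableSpace (ℕ → Option A) := borel _
  have : {x : ℕ → Option A | finErase (none : Option A) (pre x p) ∈ s} =
      ⋃ (w : List (Option A)) (_ : finErase (none : Option A) w ∈ s),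
        {x : ℕ → Option A | pre x p = w} := by
    ext x
    simp only [Set.mem_setOf_eq, Set.mem_iUnion]
    exact ⟨fun hx => ⟨pre x p, hx, rfl⟩, by rintro ⟨w, hw, rfl⟩; exact hw⟩
  rw [this]
  exact MeasurableSet.iUnion fun w => MeasurableSet.iUnion fun _ => measurableSet_pre_eq p w

end Aux1

/-- The function `f : (A ∪ {◁})^ω → A^ω`, `f(x) = x^◁` if `x^◁` is
defined and infinite and `f(x) = 0^ω` otherwise (the letter `0` being `z`), is Borel
measurable: the preimage of every open set is Borel. -/
theorem eraseFun_borel (A : Type) [Fintype A] [DecidableEq A] [TopologicalSpace A]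
    [DiscreteTopology A] (z : A) :
    ∀ U : Set (ℕ → A), IsOpen U →
      MeasurableSet[borel (ℕ → Option A)] (eraseFun z ⁻¹' U) := by
  letI : MeasurableSpace (ℕ → Option A) := borel _
  letI : MeasurableSpace (Option (List (Option A))) := ⊤
  letI : MeasurableSpace A := ⊤
  haveI : OpensMeasurableSpace A := ⟨le_top⟩
  set G : (ℕ → Option A) → (ℕ → Option (List (Option A))) :=
    fun x p => finErase (none : Option A) (pre x p) with hG
  have measG : Measurable G := by
    rw [measurable_pi_iff]
    intro p s _
    exact meas_finErase_pre p s
  have evalMeas : ∀ (p : ℕ) (S : Set (Option (List (Option A)))),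
      MeasurableSet ((fun u : ℕ → Option (List (Option A)) => u p) ⁻¹' S) :=
    fun p S => (measurable_pi_apply p) MeasurableSpace.measurableSet_top
  have hDom : MeasurableSet (DomSeq A) := by
    unfold DomSeq
    rw [Set.setOf_and]
    apply MeasurableSet.inter
    · rw [Set.setOf_forall]
      exact MeasurableSet.iInter fun n =>
        evalMeas n {o | o.isSome}
    · rw [Set.setOf_forall]
      refine MeasurableSet.iInter fun k => ?_
      rw [Set.setOf_exists]
      refine MeasurableSet.iUnion fun N => ?_
      rw [Set.setOf_exists]
      refine MeasurableSet.iUnion fun w => ?_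
      rw [Set.setOf_and]
      apply MeasurableSet.inter
      · exact MeasurableSet.const _
      · rw [Set.setOf_forall]
        exact MeasurableSet.iInter fun p =>
          evalMeas p {o | p ≥ N → ∀ l, o = some l → l.take k = w.map some}
  have hVal : ∀ (i : ℕ) (a : A), MeasurableSet (ValSeq A i a) := by
    intro i a
    unfold ValSeq
    rw [Set.setOf_exists]
    refine MeasurableSet.iUnion fun N => ?_
    rw [Set.setOf_forall]
    exact MeasurableSet.iInter fun p =>
      evalMeas p {o | p ≥ N → ∀ l, o = some l → l[i]? = some (some a)}
  have key : ∀ (i : ℕ) (a : A), MeasurableSet {x : ℕ → Option A | eraseFun z x i = a} := by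
    intro i a
    have hset : {x : ℕ → Option A | eraseFun z x i = a} =
        (G ⁻¹' DomSeq A ∩ G ⁻¹' ValSeq A i a) ∪
          ((G ⁻¹' DomSeq A)ᶜ ∩ {x : ℕ → Option A | z = a}) := by
      ext x
      simp only [Set.mem_setOf_eq, Set.mem_union, Set.mem_inter_iff, Set.mem_compl_iff,
        Set.mem_preimage]
      by_cases h : ∃ y : ℕ → A, ErasesTo (none : Option A) x (fun i => some (y i))
      · have hdom : G x ∈ DomSeq A := (mem_domSeq_iff x).mpr h
        have hval := mem_valSeq_iff h.choose_spec i a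
        rw [eraseFun, dif_pos h]
        constructor
        · intro hh; exact Or.inl ⟨hdom, hval.mpr hh⟩
        · rintro (⟨_, hv⟩ | ⟨hnd, _⟩)
          · exact hval.mp hv
          · exact absurd hdom hnd
      · have hdom : G x ∉ DomSeq A := fun hc => h ((mem_domSeq_iff x).mp hc)
        rw [eraseFun, dif_neg h]
        constructor
        · intro hh; exact Or.inr ⟨hdom, hh⟩
        · rintro (⟨hd, _⟩ | ⟨_, hh⟩)
          · exact absurd hd hdom
          · exact hh
    rw [hset]
    exact ((measG hDom).inter (measG (hVal i a))).union
      ((measG hDom).compl.inter (MeasurableSet.const _))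
  intro U hU
  have hUm : MeasurableSet U := hU.measurableSet
  have hf : Measurable (eraseFun z : (ℕ → Option A) → (ℕ → A)) := by
    rw [measurable_pi_iff]
    intro i s _
    have : (fun x : ℕ → Option A => eraseFun z x i) ⁻¹' s =
        ⋃ (a : A) (_ : a ∈ s), {x : ℕ → Option A | eraseFun z x i = a} := by
      ext x
      simp only [Set.mem_preimage, Set.mem_iUnion, Set.mem_setOf_eq]
      constructor
      · intro hh; exact ⟨_, hh, rfl⟩
      · rintro ⟨a, ha, hh⟩; rw [hh]; exact ha
    rw [this]
    exact MeasurableSet.iUnion fun a => MeasurableSet.iUnion fun _ => key i a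
  exact hf hUm
end

section
/- The function f_∞ : (A ∪ {◁_n : 0 < n < ω})^ω → A^ω, defined by f_∞(x) = lim_{n<ω} (f_n ∘ … ∘ f_1)(x) when this limit is defined and infinite, and f_∞(x) = 0^ω otherwise, is Borel measurable. -/
open Set MeasureTheory

/-! ### Auxiliary material for the proof of `fInf_borel` -/

section Aux

/-- Coordinate `i` of the eraser evaluations of the prefixes of `z` stabilizes to `c`. -/
def StabG (e : Letter) (z : ℕ → Letter) (i : ℕ) (c : Letter) : Prop :=
  ∃ N, ∀ p ≥ N, ∀ l, finErase e (pre z p) = some l → l[i]? = some c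

/-- `z^e` is defined and infinite. -/
def EG (e : Letter) (z : ℕ → Letter) : Prop :=
  (∀ p, (finErase e (pre z p)).isSome) ∧ ∀ i, ∃ c, StabG e z i c

lemma length_pre {B : Type*} (z : ℕ → B) (p : ℕ) : (pre z p).length = p := by
  simp [pre]

lemma pre_getElem?_lt {B : Type*} (z : ℕ → B) {j p : ℕ} (h : j < p) :
    (pre z p)[j]? = some (z j) := by
  simp [pre, List.getElem?_range h]

lemma pre_getElem?_ge {B : Type*} (z : ℕ → B) {j p : ℕ} (h : p ≤ j) :
    (pre z p)[j]? = none :=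
  List.getElem?_eq_none (by simpa [length_pre] using h)

lemma erasesTo_stab {e : Letter} {z y : ℕ → Letter} (h : ErasesTo e z y) (i : ℕ) :
    StabG e z i (y i) := by
  obtain ⟨N, hN⟩ := h.2 (i + 1)
  refine ⟨N, fun p hp l hl => ?_⟩
  have h1 : (l.take (i + 1))[i]? = l[i]? := List.getElem?_take_of_lt (Nat.lt_succ_self i)
  rw [hN p hp l hl] at h1
  rw [← h1, pre_getElem?_lt _ (Nat.lt_succ_self i)]

lemma stabG_unique {e : Letter} {z : ℕ → Letter} {i : ℕ} {c c' : Letter}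
    (hs : ∀ p, (finErase e (pre z p)).isSome)
    (h1 : StabG e z i c) (h2 : StabG e z i c') : c = c' := by
  obtain ⟨N1, h1⟩ := h1
  obtain ⟨N2, h2⟩ := h2
  obtain ⟨l, hl⟩ := Option.isSome_iff_exists.mp (hs (max N1 N2))
  have e1 := h1 (max N1 N2) (le_max_left _ _) l hl
  have e2 := h2 (max N1 N2) (le_max_right _ _) l hl
  rw [e1] at e2
  exact Option.some_injective _ e2

lemma eg_iff (e : Letter) (z : ℕ → Letter) :
    (∃ y, ErasesTo e z y) ↔ EG e z := by
  constructor
  · rintro ⟨y, hy⟩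
    exact ⟨hy.1, fun i => ⟨y i, erasesTo_stab hy i⟩⟩
  · rintro ⟨hs, hi⟩
    choose c hc using hi
    choose Nf hNf using hc
    refine ⟨c, hs, fun k => ⟨(Finset.range k).sup Nf, fun p hp l hl => ?_⟩⟩
    have hget : ∀ i < k, l[i]? = some (c i) := fun i hik =>
      hNf i p (le_trans (Finset.le_sup (Finset.mem_range.mpr hik)) hp) l hl
    apply List.ext_getElem?
    intro n
    by_cases hn : n < k
    · rw [List.getElem?_take_of_lt hn, hget n hn, pre_getElem?_lt _ hn]
    · rw [List.getElem?_eq_none (le_trans (show (l.take k).length ≤ k by rw [List.length_take]; exact min_le_left _ _) (not_lt.mp hn)),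
        pre_getElem?_ge _ (not_lt.mp hn)]

lemma fStep_eq_iff (k : ℕ) (z : ℕ → Letter) (i : ℕ) (c : Letter) :
    fStep k z i = c ↔
      ((EG (er k) z ∧ StabG (er k) z i c) ∨ (¬ EG (er k) z ∧ c = ltr false)) := by
  unfold fStep
  by_cases h : ∃ y, ErasesTo (er k) z y
  · rw [dif_pos h]
    have hE : EG (er k) z := (eg_iff _ _).1 h
    have hy := h.choose_spec
    constructor
    · rintro rfl
      exact Or.inl ⟨hE, erasesTo_stab hy i⟩
    · rintro (⟨_, hst⟩ | ⟨hne, _⟩)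
      · exact stabG_unique hE.1 (erasesTo_stab hy i) hst
      · exact absurd hE hne
  · rw [dif_neg h]
    have hE : ¬ EG (er k) z := fun he => h ((eg_iff _ _).2 he)
    constructor
    · rintro rfl
      exact Or.inr ⟨hE, rfl⟩
    · rintro (⟨he, _⟩ | ⟨_, hc⟩)
      · exact absurd he hE
      · exact hc.symm

/-- Coordinate `i` of `fIter · x` stabilizes to `c`. -/
def StabL (x : ℕ → Letter) (i : ℕ) (c : Letter) : Prop :=
  ∃ N, ∀ p ≥ N, fIter p x i = c

/-- The limit of the `fIter n x` is defined, infinite and over `{0,1}`. -/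
def LG (x : ℕ → Letter) : Prop := ∀ i, ∃ b : Bool, StabL x i (ltr b)

lemma limitsTo_stab {x : ℕ → Letter} {y : ℕ → Bool}
    (h : LimitsTo (fun n => fIter n x) (fun i => ltr (y i))) (i : ℕ) :
    StabL x i (ltr (y i)) := by
  obtain ⟨N, hN⟩ := h (i + 1)
  exact ⟨N, fun p hp => hN p hp i (Nat.lt_succ_self i)⟩

lemma stabL_unique {x : ℕ → Letter} {i : ℕ} {c c' : Letter}
    (h1 : StabL x i c) (h2 : StabL x i c') : c = c' := by
  obtain ⟨N1, h1⟩ := h1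
  obtain ⟨N2, h2⟩ := h2
  rw [← h1 (max N1 N2) (le_max_left _ _), ← h2 (max N1 N2) (le_max_right _ _)]

lemma lg_iff (x : ℕ → Letter) :
    (∃ y : ℕ → Bool, LimitsTo (fun n => fIter n x) (fun i => ltr (y i))) ↔ LG x := by
  constructor
  · rintro ⟨y, hy⟩
    exact fun i => ⟨y i, limitsTo_stab hy i⟩
  · intro h
    choose b hb using h
    choose Nf hNf using hb
    refine ⟨b, fun k => ⟨(Finset.range k).sup Nf, fun p hp i hik => ?_⟩⟩
    exact hNf i p (le_trans (Finset.le_sup (Finset.mem_range.mpr hik)) hp)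

lemma fInf_eq_iff (x : ℕ → Letter) (i : ℕ) (b : Bool) :
    fInf x i = b ↔ ((LG x ∧ StabL x i (ltr b)) ∨ (¬ LG x ∧ b = false)) := by
  unfold fInf
  by_cases h : ∃ y : ℕ → Bool, LimitsTo (fun n => fIter n x) (fun i => ltr (y i))
  · rw [dif_pos h]
    have hL : LG x := (lg_iff _).1 h
    have hy := h.choose_spec
    constructor
    · rintro rfl
      exact Or.inl ⟨hL, limitsTo_stab hy i⟩
    · rintro (⟨_, hst⟩ | ⟨hne, _⟩)
      · exact Sum.inl_injective (stabL_unique (limitsTo_stab hy i) hst)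
      · exact absurd hL hne
  · rw [dif_neg h]
    have hL : ¬ LG x := fun he => h ((lg_iff _).2 he)
    constructor
    · rintro rfl
      exact Or.inr ⟨hL, rfl⟩
    · rintro (⟨he, _⟩ | ⟨_, hc⟩)
      · exact absurd he hL
      · exact hc.symm

/-! #### Measurability -/

lemma ms_eval (i : ℕ) (c : Letter) :
    MeasurableSet[borel (ℕ → Letter)] {x : ℕ → Letter | x i = c} := by
  letI : MeasurableSpace (ℕ → Letter) := borel _
  haveI : BorelSpace (ℕ → Letter) := ⟨rfl⟩
  have hc : IsOpen ((fun x : ℕ → Letter => x i) ⁻¹' {c}) :=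
    (isOpen_discrete {c}).preimage (continuous_apply i)
  exact hc.measurableSet

lemma ms_pre {h : (ℕ → Letter) → ℕ → Letter}
    (hh : ∀ j c, MeasurableSet[borel (ℕ → Letter)] {x | h x j = c}) (p : ℕ)
    (w : List Letter) :
    MeasurableSet[borel (ℕ → Letter)] {x | pre (h x) p = w} := by
  by_cases hw : w.length = p
  · have hset : {x | pre (h x) p = w} =
        ⋂ (j : ℕ), ⋂ (_ : j < p), {x | w[j]? = some (h x j)} := by
      ext x
      simp only [Set.mem_iInter, Set.mem_setOf_eq]
      constructor
      · rintro rfl j hj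
        exact pre_getElem?_lt _ hj
      · intro hj
        apply List.ext_getElem?
        intro n
        by_cases hn : n < p
        · rw [pre_getElem?_lt _ hn, hj n hn]
        · rw [pre_getElem?_ge _ (not_lt.mp hn),
            List.getElem?_eq_none (hw ▸ not_lt.mp hn)]
    rw [hset]
    refine MeasurableSet.iInter fun j => MeasurableSet.iInter fun hj => ?_
    rcases ho : w[j]? with _ | c
    · have hthis : {x : ℕ → Letter | (none : Option Letter) = some (h x j)} = ∅ := by
        ext x; simp
      rw [hthis]; exact @MeasurableSet.empty (ℕ → Letter) (borel _)
    · have hthis : {x : ℕ → Letter | some c = some (h x j)} = {x | h x j = c} := by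
        ext x; simp [eq_comm]
      rw [hthis]; exact hh j c
  · have : {x : ℕ → Letter | pre (h x) p = w} = ∅ := by
      ext x
      simp only [Set.mem_setOf_eq, Set.mem_empty_iff_false, iff_false]
      intro hx
      exact hw (by rw [← hx, length_pre])
    rw [this]; exact @MeasurableSet.empty (ℕ → Letter) (borel _)

lemma ms_P {h : (ℕ → Letter) → ℕ → Letter}
    (hh : ∀ j c, MeasurableSet[borel (ℕ → Letter)] {x | h x j = c}) (e : Letter) (p : ℕ)
    (P : Option (List Letter) → Prop) :
    MeasurableSet[borel (ℕ → Letter)] {x | P (finErase e (pre (h x) p))} := by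
  have hset : {x : ℕ → Letter | P (finErase e (pre (h x) p))} =
      ⋃ (w : List Letter), ⋃ (_ : P (finErase e w)), {x | pre (h x) p = w} := by
    ext x
    simp only [Set.mem_iUnion, Set.mem_setOf_eq]
    constructor
    · intro hx
      exact ⟨pre (h x) p, hx, rfl⟩
    · rintro ⟨w, h1, h2⟩
      rw [h2]; exact h1
  rw [hset]
  exact MeasurableSet.iUnion fun w => MeasurableSet.iUnion fun _ => ms_pre hh p w

lemma ms_stabG {h : (ℕ → Letter) → ℕ → Letter}
    (hh : ∀ j c, MeasurableSet[borel (ℕ → Letter)] {x | h x j = c}) (e : Letter)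
    (i : ℕ) (c : Letter) :
    MeasurableSet[borel (ℕ → Letter)] {x | StabG e (h x) i c} := by
  have hset : {x | StabG e (h x) i c} =
      ⋃ (N : ℕ), ⋂ (p : ℕ), ⋂ (_ : N ≤ p),
        {x | (fun o => ∀ l, o = some l → l[i]? = some c) (finErase e (pre (h x) p))} := by
    ext x
    simp only [StabG, Set.mem_iUnion, Set.mem_iInter, Set.mem_setOf_eq, ge_iff_le]
  rw [hset]
  exact MeasurableSet.iUnion fun N => MeasurableSet.iInter fun p =>
    MeasurableSet.iInter fun _ =>
      ms_P hh e p (fun o => ∀ l, o = some l → l[i]? = some c)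

lemma ms_EG {h : (ℕ → Letter) → ℕ → Letter}
    (hh : ∀ j c, MeasurableSet[borel (ℕ → Letter)] {x | h x j = c}) (e : Letter) :
    MeasurableSet[borel (ℕ → Letter)] {x | EG e (h x)} := by
  have hset : {x | EG e (h x)} =
      (⋂ (p : ℕ), {x | (fun o : Option (List Letter) => o.isSome = true)
          (finErase e (pre (h x) p))}) ∩
        ⋂ (i : ℕ), ⋃ (c : Letter), {x | StabG e (h x) i c} := by
    ext x
    simp only [EG, Set.mem_inter_iff, Set.mem_iInter, Set.mem_iUnion, Set.mem_setOf_eq]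
  rw [hset]
  exact (MeasurableSet.iInter fun p =>
      ms_P hh e p (fun o : Option (List Letter) => o.isSome = true)).inter
    (MeasurableSet.iInter fun i => MeasurableSet.iUnion fun c => ms_stabG hh e i c)

lemma ms_fIter (n : ℕ) (i : ℕ) (c : Letter) :
    MeasurableSet[borel (ℕ → Letter)] {x | fIter n x i = c} := by
  induction n generalizing i c with
  | zero => exact ms_eval i c
  | succ n ih =>
    have hset : {x | fIter (n + 1) x i = c} =
        (({x | EG (er n) (fIter n x)} ∩ {x | StabG (er n) (fIter n x) i c}) ∪
          ({x | EG (er n) (fIter n x)}ᶜ ∩ {x : ℕ → Letter | c = ltr false})) := by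
      ext x
      simp only [Set.mem_union, Set.mem_inter_iff, Set.mem_compl_iff, Set.mem_setOf_eq]
      exact fStep_eq_iff n (fIter n x) i c
    rw [hset]
    have hE := ms_EG (fun j c => ih j c) (er n)
    refine (hE.inter (ms_stabG (fun j c => ih j c) (er n) i c)).union
      (hE.compl.inter ?_)
    by_cases hc : c = ltr false
    · have h1 : {_x : ℕ → Letter | c = ltr false} = Set.univ := by ext x; simp [hc]
      rw [h1]; exact @MeasurableSet.univ (ℕ → Letter) (borel _)
    · have h1 : {_x : ℕ → Letter | c = ltr false} = ∅ := by ext x; simp [hc]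
      rw [h1]; exact @MeasurableSet.empty (ℕ → Letter) (borel _)

lemma ms_stabL (i : ℕ) (c : Letter) :
    MeasurableSet[borel (ℕ → Letter)] {x | StabL x i c} := by
  have hset : {x | StabL x i c} =
      ⋃ (N : ℕ), ⋂ (p : ℕ), ⋂ (_ : N ≤ p), {x | fIter p x i = c} := by
    ext x
    simp only [StabL, Set.mem_iUnion, Set.mem_iInter, Set.mem_setOf_eq, ge_iff_le]
  rw [hset]
  exact MeasurableSet.iUnion fun N => MeasurableSet.iInter fun p =>
    MeasurableSet.iInter fun _ => ms_fIter p i c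

lemma ms_LG : MeasurableSet[borel (ℕ → Letter)] {x | LG x} := by
  have hset : {x | LG x} = ⋂ (i : ℕ), ⋃ (b : Bool), {x | StabL x i (ltr b)} := by
    ext x
    simp only [LG, Set.mem_iInter, Set.mem_iUnion, Set.mem_setOf_eq]
  rw [hset]
  exact MeasurableSet.iInter fun i => MeasurableSet.iUnion fun b => ms_stabL i (ltr b)

lemma ms_fInf (i : ℕ) (b : Bool) :
    MeasurableSet[borel (ℕ → Letter)] {x | fInf x i = b} := by
  have hset : {x | fInf x i = b} =
      (({x | LG x} ∩ {x | StabL x i (ltr b)}) ∪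
        ({x | LG x}ᶜ ∩ {x : ℕ → Letter | b = false})) := by
    ext x
    simp only [Set.mem_union, Set.mem_inter_iff, Set.mem_compl_iff, Set.mem_setOf_eq]
    exact fInf_eq_iff x i b
  rw [hset]
  refine (ms_LG.inter (ms_stabL i (ltr b))).union (ms_LG.compl.inter ?_)
  by_cases hb : b = false
  · have h1 : {_x : ℕ → Letter | b = false} = Set.univ := by ext x; simp [hb]
    rw [h1]; exact @MeasurableSet.univ (ℕ → Letter) (borel _)
  · have h1 : {_x : ℕ → Letter | b = false} = ∅ := by ext x; simp [hb]
    rw [h1]; exact @MeasurableSet.empty (ℕ → Letter) (borel _)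

end Aux

/-- The function `f_∞(x) = lim_{n<ω} (f_n ∘ … ∘ f_1)(x)` (and `0^ω`
when this limit is not defined and infinite) is Borel measurable. -/
theorem fInf_borel :
    ∀ U : Set (ℕ → Bool), IsOpen U →
      MeasurableSet[borel (ℕ → Letter)] (fInf ⁻¹' U) := by
  intro U hU
  classical
  set cyl : List Bool → Set (ℕ → Bool) :=
    fun w => {y | ∀ j < w.length, y j = w.getD j false} with hcyl
  have hdecomp : U = ⋃ (w : {w : List Bool // cyl w ⊆ U}), cyl (w : List Bool) := by
    apply Set.Subset.antisymm
    · intro y hy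
      obtain ⟨I, u, hIu, hpi⟩ := isOpen_pi_iff.mp hU y hy
      set n := I.sup id + 1 with hn
      have hgetD : ∀ a < n, ((List.range n).map y).getD a false = y a := by
        intro a han
        rw [List.getD_eq_getElem?_getD, List.getElem?_map, List.getElem?_range han]
        rfl
      have hsub : cyl ((List.range n).map y) ⊆ U := by
        intro z hz
        apply hpi
        rw [Set.mem_pi]
        intro a ha
        have ha' : a ∈ I := ha
        have han : a < n := Nat.lt_succ_of_le (Finset.le_sup (f := id) ha')
        have hz' := hz a (by simpa using han)
        rw [hgetD a han] at hz'
        rw [hz']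
        exact (hIu a ha').2
      refine Set.mem_iUnion.mpr ⟨⟨(List.range n).map y, hsub⟩, ?_⟩
      intro j hj
      simp only [List.length_map, List.length_range] at hj
      exact (hgetD j hj).symm
    · exact Set.iUnion_subset fun w => w.2
  rw [hdecomp, Set.preimage_iUnion]
  refine MeasurableSet.iUnion fun w => ?_
  have hpre : fInf ⁻¹' cyl (w : List Bool) =
      ⋂ (j : ℕ), ⋂ (_ : j < (w : List Bool).length),
        {x | fInf x j = (w : List Bool).getD j false} := by
    ext x
    simp only [Set.mem_preimage, hcyl, Set.mem_setOf_eq, Set.mem_iInter]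
  rw [hpre]
  exact MeasurableSet.iInter fun j => MeasurableSet.iInter fun _ => ms_fInf j _
end

section
/- Let X be the set of infinite words over {0,1} that contain infinitely many occurrences of the letter 1. Then (X^{≈∞})^≈ ≤_W X^{≈∞}; that is, there exists a continuous function f from ({0,1} ∪ {◁_n : 0 < n < ω} ∪ {◁})^ω to ({0,1} ∪ {◁_n : 0 < n < ω})^ω such that (X^{≈∞})^≈ = f^{-1}(X^{≈∞}). -/
open Set MeasureTheory

/-! ### Auxiliary relabelling machinery -/

section MapLemmas
variable {B C : Type*} [DecidableEq B] [DecidableEq C]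

lemma eraseStep_map (g : B → C) (hg : Function.Injective g) (e : B)
    (acc : Option (List B)) (a : B) :
    eraseStep (g e) (acc.map (List.map g)) (g a)
      = (eraseStep e acc a).map (List.map g) := by
  cases acc with
  | none => rfl
  | some l =>
    by_cases h : a = e
    · subst h
      cases l <;> simp [eraseStep]
    · have h' : g a ≠ g e := fun he => h (hg he)
      simp [eraseStep, h, h']

lemma foldl_eraseStep_map (g : B → C) (hg : Function.Injective g) (e : B) :
    ∀ (u : List B) (acc : Option (List B)),
      (u.map g).foldl (eraseStep (g e)) (acc.map (List.map g))
        = (u.foldl (eraseStep e) acc).map (List.map g)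
  | [], acc => rfl
  | a :: u, acc => by
    simp only [List.map_cons, List.foldl_cons]
    rw [eraseStep_map g hg e acc a]
    exact foldl_eraseStep_map g hg e u _

lemma finErase_map (g : B → C) (hg : Function.Injective g) (e : B) (u : List B) :
    finErase (g e) (u.map g) = (finErase e u).map (List.map g) := by
  unfold finErase
  have h := foldl_eraseStep_map g hg e u (some [])
  simp only [Option.map_some, List.map_nil] at h
  rw [h, Option.map_map, Option.map_map]
  congr 1
  funext l
  simp [Function.comp, List.map_reverse]

lemma pre_comp (g : B → C) (x : ℕ → B) (n : ℕ) :
    pre (fun i => g (x i)) n = (pre x n).map g := by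
  simp [pre, List.map_map, Function.comp]

lemma ErasesTo.map {g : B → C} (hg : Function.Injective g) {e : B} {x y : ℕ → B}
    (h : ErasesTo e x y) : ErasesTo (g e) (fun i => g (x i)) (fun i => g (y i)) := by
  constructor
  · intro n
    rw [pre_comp, finErase_map g hg]
    have := h.1 n
    cases hfe : finErase e (pre x n) <;> simp [hfe] at this ⊢
  · intro k
    obtain ⟨N, hN⟩ := h.2 k
    refine ⟨N, fun p hp l hl => ?_⟩
    rw [pre_comp, finErase_map g hg] at hl
    obtain ⟨l0, hl0, rfl⟩ := Option.map_eq_some_iff.mp hl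
    rw [← List.map_take, hN p hp l0 hl0]
    exact (pre_comp g y k).symm

lemma erasesTo_of_map {g : B → C} (hg : Function.Injective g) {e : B} {x : ℕ → B}
    {w : ℕ → C} (h : ErasesTo (g e) (fun i => g (x i)) w) :
    ∃ y : ℕ → B, w = (fun i => g (y i)) ∧ ErasesTo e x y := by
  have h1 : ∀ n, (finErase e (pre x n)).isSome := by
    intro n
    have := h.1 n
    rw [pre_comp, finErase_map g hg] at this
    cases hfe : finErase e (pre x n) <;> simp [hfe] at this ⊢
  have hw : ∀ i, ∃ b, g b = w i := by
    intro i
    obtain ⟨N, hN⟩ := h.2 (i + 1)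
    obtain ⟨l0, hl0⟩ := Option.isSome_iff_exists.mp (h1 N)
    have hl : finErase (g e) (pre (fun j => g (x j)) N) = some (l0.map g) := by
      rw [pre_comp, finErase_map g hg, hl0]; rfl
    have htake := hN N le_rfl _ hl
    have h2 := congrArg (fun l => l[i]?) htake
    simp only [pre, List.getElem?_take, List.getElem?_map, List.getElem?_range,
      Nat.lt_succ_self, if_pos] at h2
    cases h3 : l0[i]? with
    | none => rw [h3] at h2; simp at h2
    | some b => rw [h3] at h2; simp at h2; exact ⟨b, h2⟩
  choose y hy using hw
  have hwy : w = fun i => g (y i) := funext fun i => (hy i).symm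
  refine ⟨y, hwy, h1, ?_⟩
  intro k
  obtain ⟨N, hN⟩ := h.2 k
  refine ⟨N, fun p hp l hl => ?_⟩
  have hl' : finErase (g e) (pre (fun j => g (x j)) p) = some (l.map g) := by
    rw [pre_comp, finErase_map g hg, hl]; rfl
  have htake := hN p hp _ hl'
  rw [← List.map_take, hwy, pre_comp] at htake
  exact List.map_injective_iff.mpr hg htake

lemma eraser_notMem_foldl (e : B) :
    ∀ (u : List B) (acc : Option (List B)), (∀ l, acc = some l → e ∉ l) →
      ∀ l, u.foldl (eraseStep e) acc = some l → e ∉ l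
  | [], _, hacc => hacc
  | a :: u, acc, hacc => by
    refine eraser_notMem_foldl e u (eraseStep e acc a) ?_
    intro l hl
    cases acc with
    | none => simp [eraseStep] at hl
    | some m =>
      by_cases h : a = e
      · subst h
        cases m with
        | nil => simp [eraseStep] at hl
        | cons b t =>
          simp [eraseStep] at hl
          subst hl
          intro hmem
          exact hacc _ rfl (List.mem_cons_of_mem _ hmem)
      · simp [eraseStep, h] at hl
        subst hl
        intro hmem
        rcases List.mem_cons.mp hmem with h1 | h1
        · exact h h1.symm
        · exact hacc _ rfl h1

lemma finErase_notMem (e : B) (u l : List B)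
    (h : finErase e u = some l) : e ∉ l := by
  unfold finErase at h
  obtain ⟨m, hm, rfl⟩ := Option.map_eq_some_iff.mp h
  intro hmem
  exact eraser_notMem_foldl e u (some []) (by simp) m hm (List.mem_reverse.mp hmem)

lemma ErasesTo.ne_eraser {e : B} {x y : ℕ → B} (h : ErasesTo e x y) (i : ℕ) :
    y i ≠ e := by
  obtain ⟨N, hN⟩ := h.2 (i + 1)
  obtain ⟨l, hl⟩ := Option.isSome_iff_exists.mp (h.1 N)
  have htake := hN N le_rfl l hl
  have hnot := finErase_notMem e _ l hl
  have hmem : y i ∈ pre y (i + 1) := by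
    simp only [pre, List.mem_map]
    exact ⟨i, by simp, rfl⟩
  rw [← htake] at hmem
  intro he
  exact hnot (List.take_subset _ _ (he ▸ hmem))

end MapLemmas

/-- The eraser shift `◁_k ↦ ◁_{k+1}` on `Letter`, identity on binary letters. -/
def shiftL : Letter → Letter
  | Sum.inl b => Sum.inl b
  | Sum.inr k => Sum.inr (k + 1)

lemma shiftL_injective : Function.Injective shiftL := by
  intro a b h
  cases a <;> cases b <;> simp [shiftL] at h <;> simp [h]

/-- Relabelling `◁ ↦ ◁_1`, `◁_k ↦ ◁_{k+1}`, identity on binary letters. -/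
def gMap : Option Letter → Letter
  | none => Sum.inr 0
  | some a => shiftL a

lemma gMap_injective : Function.Injective gMap := by
  intro a b h
  match a, b with
  | none, none => rfl
  | none, some c => cases c <;> simp [gMap, shiftL] at h
  | some c, none => cases c <;> simp [gMap, shiftL] at h
  | some c, some d => exact congrArg some (shiftL_injective h)

/-- Left inverse of `shiftL`. -/
def shiftInv : Letter → Letter
  | Sum.inl b => Sum.inl b
  | Sum.inr 0 => Sum.inl false
  | Sum.inr (k + 1) => Sum.inr k

lemma shiftInv_shiftL (a : Letter) : shiftInv (shiftL a) = a := by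
  cases a <;> rfl


/-- For `X` the set of infinite binary words with infinitely many
`1`s, `(X^{≈∞})^≈ ≤_W X^{≈∞}` : some continuous function `f` satisfies
`(X^{≈∞})^≈ = f⁻¹(X^{≈∞})`. -/
theorem approx_infEraseSet_wadge_le :
    WadgeLE (ApproxSet (InfEraseSet InfManyOnes)) (InfEraseSet InfManyOnes) := by
  refine ⟨fun x i => gMap (x i), ?_, ?_⟩
  · exact continuous_pi fun i =>
      (continuous_of_discreteTopology (f := gMap)).comp (continuous_apply i)
  · ext x
    simp only [ApproxSet, InfEraseSet, Set.mem_setOf_eq, Set.mem_preimage]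
    constructor
    · rintro ⟨y', her, t, ht0, htchain, z, hz, hlim⟩
      subst ht0
      refine ⟨fun n => Nat.casesOn n (fun i => gMap (x i)) (fun m i => shiftL (t m i)),
        rfl, ?_, z, hz, ?_⟩
      · intro n
        cases n with
        | zero => exact ErasesTo.map gMap_injective her
        | succ m => exact ErasesTo.map shiftL_injective (htchain m)
      · intro k
        obtain ⟨N, hN⟩ := hlim k
        refine ⟨N + 1, fun p hp i hi => ?_⟩
        cases p with
        | zero => omega
        | succ q =>
          show shiftL (t q i) = ltr (z i)
          rw [hN q (by omega) i hi]
          rfl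
    · rintro ⟨s, hs0, hchain, z, hz, hlim⟩
      have h01 := hchain 0
      rw [hs0] at h01
      obtain ⟨y, hy, hxy⟩ :=
        erasesTo_of_map gMap_injective (e := none) (x := x) (w := s 1) h01
      have hne : ∀ i, y i ≠ none := fun i => hxy.ne_eraser i
      choose y' hy' using fun i => Option.ne_none_iff_exists'.mp (hne i)
      have hysome : y = fun i => some (y' i) := funext hy'
      rw [hysome] at hxy hy
      set t : ℕ → ℕ → Letter := fun n i => shiftInv (s (n + 1) i) with htdef
      have hinv : ∀ n, s (n + 1) = fun i => shiftL (t n i) := by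
        intro n
        induction n with
        | zero =>
          funext i
          have : s 1 i = shiftL (y' i) := by rw [hy]; rfl
          rw [htdef]
          simp only [this, shiftInv_shiftL]
        | succ m ih =>
          have hc := hchain (m + 1)
          rw [ih] at hc
          obtain ⟨w, hw, -⟩ :=
            erasesTo_of_map shiftL_injective (e := er m) (x := t m) (w := s (m + 2)) hc
          funext i
          have : s (m + 2) i = shiftL (w i) := by rw [hw]
          rw [htdef]
          simp only [this, shiftInv_shiftL]
      have ht0 : t 0 = y' := by
        funext i
        have : s 1 i = shiftL (y' i) := by rw [hy]; rfl
        rw [htdef]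
        simp only [this, shiftInv_shiftL]
      refine ⟨y', hxy, t, ht0, ?_, z, hz, ?_⟩
      · intro n
        have hc := hchain (n + 1)
        rw [hinv n, hinv (n + 1)] at hc
        obtain ⟨w, hw, hww⟩ :=
          erasesTo_of_map shiftL_injective (e := er n) (x := t n) (w := fun i => shiftL (t (n+1) i)) hc
        have : t (n + 1) = w := by
          funext i
          exact shiftL_injective (congrFun hw i)
        rw [this]
        exact hww
      · intro k
        obtain ⟨N, hN⟩ := hlim k
        refine ⟨N, fun p hp i hi => ?_⟩
        show shiftInv (s (p + 1) i) = ltr (z i)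
        rw [hN (p + 1) (by omega) i hi]
        rfl
end
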